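/- arXiv:1305.2497 — 6 statements merged into one kernel-verified Lean document; each statement's English description precedes it below -/
import Mathlib

section
/- Let Φ : (0, ∞) → (0, ∞) be locally absolutely continuous and suppose its a.e. derivative satisfies tΦ'(t)/Φ(t) → 0 as t → 0⁺ (i.e., for every η > 0 there is t₀ > 0 with |tΦ'(t)| ≤ ηΦ(t) for a.e. t ∈ (0, t₀)). Then for every ε > 0 there exists a constant c ≥ 1, depending only on ε and Φ, such that c⁻¹ t^ε ≤ Φ(t) ≤ c t^{−ε} for all t ∈ (0, 1]. -/
open MeasureTheory intervalIntegral

lemma gronwall_aux (Ψ k : ℝ → ℝ) (ε s b : ℝ) (hε : 0 < ε) (hs : 0 < s) (hsb : s ≤ b)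
    (hΨ : Continuous Ψ) (hk : Continuous k)
    (hkeq : ∀ r ∈ Set.Icc s b, k r = ε / r * Ψ r)
    (hineq : ∀ x y : ℝ, s ≤ x → x ≤ y → y ≤ b → |Ψ y - Ψ x| ≤ ∫ r in x..y, k r) :
    Ψ b * (s ^ ε * b ^ (-ε)) ≤ Ψ s ∧ Ψ s * (s ^ ε * b ^ (-ε)) ≤ Ψ b := by
  have hb0 : 0 < b := lt_of_lt_of_le hs hsb
  set V : ℝ → ℝ := fun y => ∫ r in s..y, k r with hV
  have hVderiv : ∀ y : ℝ, HasDerivAt V (k y) y := fun y =>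
    integral_hasDerivAt_right (hk.intervalIntegrable s y)
      hk.aestronglyMeasurable.stronglyMeasurableAtFilter hk.continuousAt
  have hVcont : Continuous V :=
    continuous_iff_continuousAt.mpr fun y => (hVderiv y).continuousAt
  have hVs : V s = 0 := integral_same
  have hP : 0 < s ^ ε * b ^ (-ε) :=
    mul_pos (Real.rpow_pos_of_pos hs ε) (Real.rpow_pos_of_pos hb0 (-ε))
  have hss : s ^ ε * s ^ (-ε) = 1 := by
    rw [← Real.rpow_add hs]; simp
  have hbb : b ^ (-ε) * b ^ ε = 1 := by
    rw [← Real.rpow_add hb0]; simp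
  have hrpowcont : ContinuousOn (fun y : ℝ => y ^ (-ε)) (Set.Icc s b) := fun y hy =>
    (Real.continuousAt_rpow_const y (-ε)
      (Or.inl (ne_of_gt (lt_of_lt_of_le hs hy.1)))).continuousWithinAt
  have hrpowcont' : ContinuousOn (fun y : ℝ => y ^ ε) (Set.Icc s b) := fun y hy =>
    (Real.continuousAt_rpow_const y ε
      (Or.inl (ne_of_gt (lt_of_lt_of_le hs hy.1)))).continuousWithinAt
  -- upper bounds for Ψ via hineq
  have hub : ∀ y ∈ Set.Icc s b, Ψ y ≤ Ψ s + V y := by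
    intro y hy
    have := hineq s y le_rfl hy.1 hy.2
    have h2 := (abs_le.mp this).2
    linarith
  have hub2 : ∀ x ∈ Set.Icc s b, Ψ x ≤ Ψ b + ((∫ r in s..b, k r) - V x) := by
    intro x hx
    have h1 := hineq x b hx.1 hx.2 le_rfl
    have hsplit : V x + ∫ r in x..b, k r = ∫ r in s..b, k r :=
      integral_add_adjacent_intervals (hk.intervalIntegrable s x) (hk.intervalIntegrable x b)
    have h3 : Ψ x - Ψ b ≤ |Ψ b - Ψ x| := by
      rw [abs_sub_comm]; exact le_abs_self _
    linarith [le_trans h3 h1]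
  constructor
  · -- antitone w : y ↦ (Ψ s + V y) * (s^ε * y^(-ε))
    set w : ℝ → ℝ := fun y => (Ψ s + V y) * (s ^ ε * y ^ (-ε)) with hw
    have hwderiv : ∀ y ∈ Set.Ioo s b, HasDerivAt w
        (k y * (s ^ ε * y ^ (-ε)) + (Ψ s + V y) * (s ^ ε * (-ε * y ^ (-ε - 1)))) y := by
      intro y hy
      have hy0 : (0:ℝ) < y := lt_trans hs hy.1
      have h1 : HasDerivAt (fun y => Ψ s + V y) (k y) y := (hVderiv y).const_add _
      have h2 : HasDerivAt (fun y : ℝ => s ^ ε * y ^ (-ε)) (s ^ ε * (-ε * y ^ (-ε - 1))) y := by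
        have := (Real.hasDerivAt_rpow_const (p := -ε) (x := y) (Or.inl hy0.ne')).const_mul
          ((s:ℝ) ^ ε)
        simpa [mul_comm, mul_left_comm] using this
      exact h1.mul h2
    have hwanti : AntitoneOn w (Set.Icc s b) := by
      apply antitoneOn_of_deriv_nonpos (convex_Icc s b)
      · exact ((continuous_const.add hVcont).continuousOn).mul
          (continuousOn_const.mul hrpowcont)
      · intro y hy
        rw [interior_Icc] at hy
        exact ((hwderiv y hy).differentiableAt).differentiableWithinAt
      · intro y hy
        rw [interior_Icc] at hy
        rw [(hwderiv y hy).deriv]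
        have hy0 : (0:ℝ) < y := lt_trans hs hy.1
        have hyIcc : y ∈ Set.Icc s b := ⟨hy.1.le, hy.2.le⟩
        have hky : k y = ε / y * Ψ y := hkeq y hyIcc
        have hpow : y ^ (-ε) = y ^ (-ε - 1) * y := by
          rw [← Real.rpow_add_one hy0.ne' (-ε - 1)]; ring_nf
        have hfact : k y * (s ^ ε * y ^ (-ε)) + (Ψ s + V y) * (s ^ ε * (-ε * y ^ (-ε - 1)))
            = s ^ ε * y ^ (-ε - 1) * ε * (Ψ y - (Ψ s + V y)) := by
          rw [hky, hpow]; field_simp; ring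
        rw [hfact]
        have h1 : Ψ y - (Ψ s + V y) ≤ 0 := by linarith [hub y hyIcc]
        have h2 : 0 ≤ s ^ ε * y ^ (-ε - 1) * ε :=
          le_of_lt (mul_pos (mul_pos (Real.rpow_pos_of_pos hs ε)
            (Real.rpow_pos_of_pos hy0 _)) hε)
        exact mul_nonpos_of_nonneg_of_nonpos h2 h1
    have hkey := hwanti (Set.left_mem_Icc.mpr hsb) (Set.right_mem_Icc.mpr hsb) hsb
    have hws : w s = Ψ s := by
      simp only [hw, hVs, add_zero, hss, mul_one]
    have hwb : w b = (Ψ s + V b) * (s ^ ε * b ^ (-ε)) := rfl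
    have hΨb := hub b (Set.right_mem_Icc.mpr hsb)
    calc Ψ b * (s ^ ε * b ^ (-ε)) ≤ (Ψ s + V b) * (s ^ ε * b ^ (-ε)) := by
          exact mul_le_mul_of_nonneg_right hΨb hP.le
      _ = w b := rfl
      _ ≤ w s := hkey
      _ = Ψ s := hws
  · -- monotone W : x ↦ (Ψ b + C - V x) * (b^(-ε) * x^ε)
    set C : ℝ := ∫ r in s..b, k r with hC
    set W : ℝ → ℝ := fun x => (Ψ b + C - V x) * (b ^ (-ε) * x ^ ε) with hW
    have hWderiv : ∀ x ∈ Set.Ioo s b, HasDerivAt W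
        (-k x * (b ^ (-ε) * x ^ ε) + (Ψ b + C - V x) * (b ^ (-ε) * (ε * x ^ (ε - 1)))) x := by
      intro x hx
      have hx0 : (0:ℝ) < x := lt_trans hs hx.1
      have h1 : HasDerivAt (fun x => Ψ b + C - V x) (-k x) x := (hVderiv x).const_sub _
      have h2 : HasDerivAt (fun x : ℝ => b ^ (-ε) * x ^ ε) (b ^ (-ε) * (ε * x ^ (ε - 1))) x := by
        have := (Real.hasDerivAt_rpow_const (p := ε) (x := x) (Or.inl hx0.ne')).const_mul
          ((b:ℝ) ^ (-ε))
        simpa [mul_comm, mul_left_comm] using this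
      exact h1.mul h2
    have hWmono : MonotoneOn W (Set.Icc s b) := by
      apply monotoneOn_of_deriv_nonneg (convex_Icc s b)
      · exact ((continuous_const.sub hVcont).continuousOn).mul
          (continuousOn_const.mul hrpowcont')
      · intro x hx
        rw [interior_Icc] at hx
        exact ((hWderiv x hx).differentiableAt).differentiableWithinAt
      · intro x hx
        rw [interior_Icc] at hx
        rw [(hWderiv x hx).deriv]
        have hx0 : (0:ℝ) < x := lt_trans hs hx.1
        have hxIcc : x ∈ Set.Icc s b := ⟨hx.1.le, hx.2.le⟩
        have hkx : k x = ε / x * Ψ x := hkeq x hxIcc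
        have hpow : x ^ ε = x ^ (ε - 1) * x := by
          rw [← Real.rpow_add_one hx0.ne' (ε - 1)]; ring_nf
        have hfact : -k x * (b ^ (-ε) * x ^ ε) + (Ψ b + C - V x) * (b ^ (-ε) * (ε * x ^ (ε - 1)))
            = b ^ (-ε) * x ^ (ε - 1) * ε * ((Ψ b + (C - V x)) - Ψ x) := by
          rw [hkx, hpow]; field_simp; ring
        rw [hfact]
        have h1 : 0 ≤ (Ψ b + (C - V x)) - Ψ x := by linarith [hub2 x hxIcc]
        have h2 : 0 ≤ b ^ (-ε) * x ^ (ε - 1) * ε :=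
          le_of_lt (mul_pos (mul_pos (Real.rpow_pos_of_pos hb0 _)
            (Real.rpow_pos_of_pos hx0 _)) hε)
        exact mul_nonneg h2 h1
    have hkey := hWmono (Set.left_mem_Icc.mpr hsb) (Set.right_mem_Icc.mpr hsb) hsb
    have hWb : W b = Ψ b := by
      have hVb : V b = C := rfl
      simp only [hW, hVb, add_sub_cancel_right, hbb, mul_one]
    have hWs : W s = (Ψ b + C) * (b ^ (-ε) * s ^ ε) := by
      simp only [hW, hVs, sub_zero]
    have hΨs := hub2 s (Set.left_mem_Icc.mpr hsb)
    rw [hVs, sub_zero] at hΨs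
    calc Ψ s * (s ^ ε * b ^ (-ε)) ≤ (Ψ b + C) * (s ^ ε * b ^ (-ε)) := by
          exact mul_le_mul_of_nonneg_right hΨs hP.le
      _ = W s := by rw [hWs]; ring
      _ ≤ W b := hkey
      _ = Ψ b := hWb


/-- If `Φ : (0,∞) → (0,∞)` is locally absolutely continuous (with a.e.
derivative `DΦ`, encoded by the integral representation below) and `t·Φ'(t)/Φ(t) → 0`
as `t → 0⁺`, then for every `ε > 0` there is `c ≥ 1` with
`c⁻¹ t^ε ≤ Φ(t) ≤ c t^(−ε)` for all `t ∈ (0,1]`. -/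
theorem statement1 (Φ DΦ : ℝ → ℝ)
    (hpos : ∀ t : ℝ, 0 < t → 0 < Φ t)
    (hInt : ∀ s t : ℝ, 0 < s → s ≤ t → IntervalIntegrable DΦ volume s t)
    (hAC : ∀ s t : ℝ, 0 < s → s ≤ t → Φ t - Φ s = ∫ x in s..t, DΦ x)
    (hlim : ∀ η : ℝ, 0 < η → ∃ t₀ : ℝ, 0 < t₀ ∧
      ∀ᵐ t ∂(volume.restrict (Set.Ioo (0 : ℝ) t₀)), |t * DΦ t| ≤ η * Φ t) :
    ∀ ε : ℝ, 0 < ε → ∃ c : ℝ, 1 ≤ c ∧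
      ∀ t ∈ Set.Ioc (0 : ℝ) 1, c⁻¹ * t ^ ε ≤ Φ t ∧ Φ t ≤ c * t ^ (-ε) := by
  have hCont : ∀ a c : ℝ, 0 < a → ContinuousOn Φ (Set.Icc a c) := by
    intro a c ha
    by_cases hac : a ≤ c
    · have h := intervalIntegral.continuousOn_primitive_interval'
        (μ := volume) (f := DΦ) (b₁ := a) (b₂ := c) (a := a)
        (hInt a c ha hac) Set.left_mem_uIcc
      rw [Set.uIcc_of_le hac] at h
      exact ((continuousOn_const (c := Φ a)).add h).congr fun x hx => by
        have := hAC a x ha hx.1; simp only [Pi.add_apply]; linarith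
    · rw [Set.Icc_eq_empty hac]
      exact continuousOn_empty Φ
  intro ε hε
  obtain ⟨t₀, ht₀, hae⟩ := hlim ε hε
  set b : ℝ := min t₀ 1 with hbdef
  have hb0 : 0 < b := lt_min ht₀ one_pos
  have hb1 : b ≤ 1 := min_le_right _ _
  have hbt₀ : b ≤ t₀ := min_le_left _ _
  have hΦb : 0 < Φ b := hpos b hb0
  have key : ∀ s : ℝ, 0 < s → s ≤ b →
      Φ b * (s ^ ε * b ^ (-ε)) ≤ Φ s ∧ Φ s * (s ^ ε * b ^ (-ε)) ≤ Φ b := by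
    intro s hs hsb
    set proj : ℝ → ℝ := fun x => max s (min x b) with hprojdef
    have hproj_cont : Continuous proj := continuous_const.max (continuous_id.min continuous_const)
    have hproj_mem : ∀ x : ℝ, proj x ∈ Set.Icc s b := fun x =>
      ⟨le_max_left _ _, max_le hsb (min_le_right _ _)⟩
    have hproj_pos : ∀ x : ℝ, 0 < proj x := fun x => lt_of_lt_of_le hs (hproj_mem x).1
    have hproj_eq : ∀ r ∈ Set.Icc s b, proj r = r := fun r hr => by
      simp only [hprojdef]
      rw [min_eq_left hr.2, max_eq_right hr.1]
    set Ψ : ℝ → ℝ := fun x => Φ (proj x) with hΨdef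
    have hΨcont : Continuous Ψ :=
      (hCont s b hs).comp_continuous hproj_cont hproj_mem
    have hΨeq : ∀ r ∈ Set.Icc s b, Ψ r = Φ r := fun r hr => by
      simp only [hΨdef, hproj_eq r hr]
    set k : ℝ → ℝ := fun x => ε / proj x * Ψ x with hkdef
    have hkcont : Continuous k :=
      (continuous_const.div hproj_cont fun x => (hproj_pos x).ne').mul hΨcont
    have hkeq : ∀ r ∈ Set.Icc s b, k r = ε / r * Ψ r := fun r hr => by
      simp only [hkdef, hproj_eq r hr]
    have hineq : ∀ x y : ℝ, s ≤ x → x ≤ y → y ≤ b → |Ψ y - Ψ x| ≤ ∫ r in x..y, k r := by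
      intro x y hsx hxy hyb
      have hx0 : 0 < x := lt_of_lt_of_le hs hsx
      have hxI : x ∈ Set.Icc s b := ⟨hsx, le_trans hxy hyb⟩
      have hyI : y ∈ Set.Icc s b := ⟨le_trans hsx hxy, hyb⟩
      rw [hΨeq x hxI, hΨeq y hyI]
      have hACxy : Φ y - Φ x = ∫ r in x..y, DΦ r := hAC x y hx0 hxy
      -- a.e. bounds on Icc x y
      have h1 : ∀ᵐ t ∂volume, t ∈ Set.Ioo (0:ℝ) t₀ → |t * DΦ t| ≤ ε * Φ t :=
        (ae_restrict_iff' measurableSet_Ioo).mp hae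
      have hmem : ∀ᵐ t ∂(volume.restrict (Set.Icc x y)), t ∈ Set.Ioo (0:ℝ) t₀ := by
        rw [ae_restrict_iff' measurableSet_Icc]
        rw [Filter.eventually_iff, mem_ae_iff]
        refine measure_mono_null (fun t ht => ?_) (measure_singleton t₀)
        simp only [Set.mem_compl_iff, Set.mem_setOf_eq, _root_.not_imp] at ht
        obtain ⟨htI, htn⟩ := ht
        have ht0 : 0 < t := lt_of_lt_of_le hx0 htI.1
        have htt₀ : t₀ ≤ t := by
          by_contra hcon
          exact htn ⟨ht0, lt_of_not_ge hcon⟩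
        have : t = t₀ := le_antisymm (le_trans htI.2 (le_trans hyb hbt₀)) htt₀
        simpa using this
      have hbd : ∀ᵐ t ∂(volume.restrict (Set.Icc x y)), DΦ t ≤ k t ∧ -DΦ t ≤ k t := by
        filter_upwards [hmem, ae_restrict_of_ae h1,
          ae_restrict_mem measurableSet_Icc] with t htIoo himp htI
        have hb' := himp htIoo
        have ht0 : 0 < t := htIoo.1
        have htsb : t ∈ Set.Icc s b := ⟨le_trans hsx htI.1, le_trans htI.2 hyb⟩
        have hkt : k t = ε / t * Φ t := by rw [hkeq t htsb, hΨeq t htsb]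
        have habs : |DΦ t| ≤ ε / t * Φ t := by
          rw [div_mul_eq_mul_div, le_div_iff₀ ht0]
          calc |DΦ t| * t = |t * DΦ t| := by
                rw [abs_mul, abs_of_pos ht0]; ring
            _ ≤ ε * Φ t := hb'
        rw [hkt]
        exact ⟨le_trans (le_abs_self _) habs, le_trans (neg_le_abs _) habs⟩
      have hIk : IntervalIntegrable k volume x y := hkcont.intervalIntegrable x y
      have hmono1 : (∫ r in x..y, DΦ r) ≤ ∫ r in x..y, k r :=
        integral_mono_ae_restrict hxy (hInt x y hx0 hxy) hIk (hbd.mono fun t ht => ht.1)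
      have hmono2 : (∫ r in x..y, -DΦ r) ≤ ∫ r in x..y, k r :=
        integral_mono_ae_restrict hxy (hInt x y hx0 hxy).neg hIk (hbd.mono fun t ht => ht.2)
      rw [intervalIntegral.integral_neg] at hmono2
      rw [hACxy]
      exact abs_le.mpr ⟨by linarith, hmono1⟩
    have hG := gronwall_aux Ψ k ε s b hε hs hsb hΨcont hkcont hkeq hineq
    rw [hΨeq s ⟨le_rfl, hsb⟩, hΨeq b ⟨hsb, le_rfl⟩] at hG
    exact hG
  -- extrema on [b, 1]
  obtain ⟨p, hp, hpmin⟩ := isCompact_Icc.exists_isMinOn (Set.nonempty_Icc.mpr hb1)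
    (hCont b 1 hb0)
  obtain ⟨q, hq, hqmax⟩ := isCompact_Icc.exists_isMaxOn (Set.nonempty_Icc.mpr hb1)
    (hCont b 1 hb0)
  have hΦp : 0 < Φ p := hpos p (lt_of_lt_of_le hb0 hp.1)
  have hΦq : 0 < Φ q := hpos q (lt_of_lt_of_le hb0 hq.1)
  have hA : 0 < Φ b * b ^ (-ε) := mul_pos hΦb (Real.rpow_pos_of_pos hb0 _)
  have hB : 0 < Φ b * b ^ ε := mul_pos hΦb (Real.rpow_pos_of_pos hb0 _)
  refine ⟨max 1 (max (max (Φ b * b ^ (-ε))⁻¹ (Φ b * b ^ ε)) (max (Φ p)⁻¹ (Φ q))), le_max_left _ _, ?_⟩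
  set c : ℝ := max 1 (max (max (Φ b * b ^ (-ε))⁻¹ (Φ b * b ^ ε)) (max (Φ p)⁻¹ (Φ q))) with hcdef
  have hc0 : 0 < c := lt_of_lt_of_le one_pos (le_max_left _ _)
  have hcA : (Φ b * b ^ (-ε))⁻¹ ≤ c :=
    le_trans (le_trans (le_max_left _ _) (le_max_left _ _)) (le_max_right _ _)
  have hcB : Φ b * b ^ ε ≤ c :=
    le_trans (le_trans (le_max_right _ _) (le_max_left _ _)) (le_max_right _ _)
  have hcp : (Φ p)⁻¹ ≤ c :=
    le_trans (le_trans (le_max_left _ _) (le_max_right _ _)) (le_max_right _ _)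
  have hcq : Φ q ≤ c :=
    le_trans (le_trans (le_max_right _ _) (le_max_right _ _)) (le_max_right _ _)
  have hcA' : c⁻¹ ≤ Φ b * b ^ (-ε) := by
    have := inv_anti₀ (inv_pos.mpr hA) hcA
    rwa [inv_inv] at this
  have hcp' : c⁻¹ ≤ Φ p := by
    have := inv_anti₀ (inv_pos.mpr hΦp) hcp
    rwa [inv_inv] at this
  intro t ht
  obtain ⟨ht0, ht1⟩ := ht
  have htε0 : (0:ℝ) ≤ t ^ ε := (Real.rpow_pos_of_pos ht0 ε).le
  have htnε0 : (0:ℝ) ≤ t ^ (-ε) := (Real.rpow_pos_of_pos ht0 (-ε)).le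
  have htε1 : t ^ ε ≤ 1 := Real.rpow_le_one ht0.le ht1 hε.le
  have ht1ε : 1 ≤ t ^ (-ε) :=
    Real.one_le_rpow_of_pos_of_le_one_of_nonpos ht0 ht1 (neg_nonpos.mpr hε.le)
  by_cases htb : t ≤ b
  · obtain ⟨hG1, hG2⟩ := key t ht0 htb
    have hss : t ^ ε * t ^ (-ε) = 1 := by rw [← Real.rpow_add ht0]; simp
    have hbb : b ^ (-ε) * b ^ ε = 1 := by rw [← Real.rpow_add hb0]; simp
    constructor
    · calc c⁻¹ * t ^ ε ≤ (Φ b * b ^ (-ε)) * t ^ ε :=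
            mul_le_mul_of_nonneg_right hcA' htε0
        _ = Φ b * (t ^ ε * b ^ (-ε)) := by ring
        _ ≤ Φ t := hG1
    · have hmul : 0 ≤ t ^ (-ε) * b ^ ε :=
        mul_nonneg htnε0 (Real.rpow_pos_of_pos hb0 ε).le
      have h := mul_le_mul_of_nonneg_right hG2 hmul
      calc Φ t = Φ t * ((t ^ ε * t ^ (-ε)) * (b ^ (-ε) * b ^ ε)) := by
            rw [hss, hbb]; ring
        _ = Φ t * (t ^ ε * b ^ (-ε)) * (t ^ (-ε) * b ^ ε) := by ring
        _ ≤ Φ b * (t ^ (-ε) * b ^ ε) := h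
        _ = (Φ b * b ^ ε) * t ^ (-ε) := by ring
        _ ≤ c * t ^ (-ε) := mul_le_mul_of_nonneg_right hcB htnε0
  · have htI : t ∈ Set.Icc b 1 := ⟨le_of_not_ge htb, ht1⟩
    constructor
    · calc c⁻¹ * t ^ ε ≤ c⁻¹ * 1 :=
            mul_le_mul_of_nonneg_left htε1 (inv_pos.mpr hc0).le
        _ = c⁻¹ := mul_one _
        _ ≤ Φ p := hcp'
        _ ≤ Φ t := hpmin htI
    · calc Φ t ≤ Φ q := hqmax htI
        _ ≤ c := hcq
        _ = c * 1 := (mul_one _).symm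
        _ ≤ c * t ^ (-ε) := mul_le_mul_of_nonneg_left ht1ε hc0.le
end

section
/- Let Φ : (0, ∞) → (0, ∞) be locally absolutely continuous with a.e. derivative satisfying tΦ'(t)/Φ(t) → 0 as t → 0⁺, and let σ < 0. Then there exists a constant c > 0, depending only on σ and Φ, such that for every finite strictly increasing sequence k₀ < k₁ < ⋯ < k_l of nonnegative integers one has ∑_{j=0}^{l} 2^{σ k_j} Φ(2^{−k_j}) ≤ c · 2^{σ k₀} Φ(2^{−k₀}). -/
open MeasureTheory

lemma step_lemma (Φ DΦ : ℝ → ℝ) (t₀ η : ℝ) (hη0 : 0 < η) (hη1 : η < 1)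
    (hpos : ∀ t : ℝ, 0 < t → 0 < Φ t)
    (hInt : ∀ s t : ℝ, 0 < s → s ≤ t → IntervalIntegrable DΦ volume s t)
    (hAC : ∀ s t : ℝ, 0 < s → s ≤ t → Φ t - Φ s = ∫ x in s..t, DΦ x)
    (hbd : ∀ᵐ t ∂(volume.restrict (Set.Ioo (0 : ℝ) t₀)), |t * DΦ t| ≤ η * Φ t)
    (t : ℝ) (ht : 0 < t) (htt : t < t₀) :
    Φ (t / 2) ≤ Φ t / (1 - η) := by
  have ht2 : 0 < t / 2 := by linarith
  have hle : t / 2 ≤ t := by linarith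
  -- continuity of Φ on [t/2, t]
  have hcont : ContinuousOn Φ (Set.Icc (t/2) t) := by
    have hint : IntervalIntegrable DΦ volume (t/2) t := hInt _ _ ht2 hle
    have h1 : ContinuousOn (fun u => Φ (t/2) + ∫ x in (t/2)..u, DΦ x) (Set.Icc (t/2) t) := by
      have h2 := intervalIntegral.continuousOn_primitive_interval' hint
        (by rw [Set.uIcc_of_le hle]; exact Set.left_mem_Icc.2 hle)
      rw [Set.uIcc_of_le hle] at h2
      exact continuousOn_const.add h2
    refine h1.congr fun u hu => ?_
    have := hAC (t/2) u ht2 hu.1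
    linarith
  obtain ⟨u, hu, hmax⟩ := isCompact_Icc.exists_isMaxOn (Set.nonempty_Icc.2 hle) hcont
  set M := Φ u with hM
  have hu0 : 0 < u := lt_of_lt_of_le ht2 hu.1
  have hMmax : ∀ x ∈ Set.Icc (t/2) t, Φ x ≤ M := hmax
  have hΦt2 : Φ (t/2) ≤ M := hMmax _ (Set.left_mem_Icc.2 hle)
  have hΦt : Φ t ≤ M := hMmax _ (Set.right_mem_Icc.2 hle)
  have hMpos : 0 < M := hpos u hu0
  have heq : Φ t - Φ u = ∫ x in u..t, DΦ x := hAC u t hu0 hu.2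
  have hIuv : IntervalIntegrable DΦ volume u t := hInt _ _ hu0 hu.2
  have hsub : Set.Ioc u t ⊆ Set.Ioo (0:ℝ) t₀ := fun x hx =>
    ⟨hu0.trans hx.1, lt_of_le_of_lt hx.2 htt⟩
  have hae : ∀ᵐ x ∂(volume.restrict (Set.Ioc u t)), |DΦ x| ≤ 2*η*M/t := by
    have h1 := ae_restrict_of_ae_restrict_of_subset hsub hbd
    have h2 := ae_restrict_mem (μ := volume) (measurableSet_Ioc : MeasurableSet (Set.Ioc u t))
    filter_upwards [h1, h2] with x hx hxm
    have hx0 : 0 < x := lt_trans hu0 hxm.1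
    have hxt2 : t/2 ≤ x := le_trans hu.1 hxm.1.le
    have hΦx : Φ x ≤ M := hMmax x ⟨hxt2, hxm.2⟩
    have hDx : |DΦ x| = |x * DΦ x| / x := by
      rw [abs_mul, abs_of_pos hx0]
      field_simp
    rw [hDx, div_le_iff₀ hx0]
    calc |x * DΦ x| ≤ η * Φ x := hx
      _ ≤ η * M := by nlinarith
      _ ≤ 2*η*M/t * x := by
          rw [div_mul_eq_mul_div, le_div_iff₀ ht]
          nlinarith [mul_nonneg (mul_nonneg hη0.le hMpos.le)
            (by linarith : (0:ℝ) ≤ 2*x - t)]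
  have habs : |∫ x in u..t, DΦ x| ≤ η * M := by
    have h1 : |∫ x in u..t, DΦ x| ≤ ∫ x in Set.Ioc u t, |DΦ x| := by
      rw [← intervalIntegral.integral_of_le hu.2]
      exact intervalIntegral.abs_integral_le_integral_abs hu.2
    have hconst : IntegrableOn (fun _ : ℝ => 2*η*M/t) (Set.Ioc u t) volume := by
      refine integrableOn_const ?_ ?_
      · rw [Real.volume_Ioc]
        exact ENNReal.ofReal_ne_top
      · simp
    have h2 : ∫ x in Set.Ioc u t, |DΦ x| ≤ ∫ _x in Set.Ioc u t, 2*η*M/t :=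
      setIntegral_mono_ae_restrict hIuv.1.abs hconst hae
    have h3 : ∫ _x in Set.Ioc u t, (2*η*M/t : ℝ) = (t - u) * (2*η*M/t) := by
      rw [setIntegral_const, Real.volume_real_Ioc_of_le hu.2]
      simp
    have h4 : (t - u) * (2*η*M/t) ≤ η * M := by
      have htu : t - u ≤ t/2 := by linarith [hu.1]
      have hc0 : (0:ℝ) ≤ 2*η*M/t := by positivity
      have : (t-u) * (2*η*M/t) ≤ (t/2) * (2*η*M/t) := by nlinarith
      calc (t-u) * (2*η*M/t) ≤ (t/2) * (2*η*M/t) := this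
        _ = η*M := by field_simp
    calc |∫ x in u..t, DΦ x| ≤ ∫ x in Set.Ioc u t, |DΦ x| := h1
      _ ≤ ∫ _x in Set.Ioc u t, 2*η*M/t := h2
      _ = (t - u) * (2*η*M/t) := h3
      _ ≤ η * M := h4
  have hM1 : M ≤ Φ t + η * M := by
    have h5 : -(η*M) ≤ ∫ x in u..t, DΦ x := (abs_le.1 habs).1
    linarith
  have hM2 : M * (1 - η) ≤ Φ t := by nlinarith
  calc Φ (t/2) ≤ M := hΦt2
    _ ≤ Φ t / (1-η) := by
        rw [le_div_iff₀ (by linarith : (0:ℝ) < 1-η)]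
        linarith

/-- For `Φ : (0,∞) → (0,∞)` locally absolutely continuous with
`t·Φ'(t)/Φ(t) → 0` as `t → 0⁺` and `σ < 0`, the sum `∑_j 2^(σ k_j) Φ(2^(−k_j))` over a
strictly increasing finite sequence of nonnegative integers is bounded by a constant
(depending only on `σ`, `Φ`) times the first term. -/
theorem statement3 (Φ DΦ : ℝ → ℝ)
    (hpos : ∀ t : ℝ, 0 < t → 0 < Φ t)
    (hInt : ∀ s t : ℝ, 0 < s → s ≤ t → IntervalIntegrable DΦ volume s t)
    (hAC : ∀ s t : ℝ, 0 < s → s ≤ t → Φ t - Φ s = ∫ x in s..t, DΦ x)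
    (hlim : ∀ η : ℝ, 0 < η → ∃ t₀ : ℝ, 0 < t₀ ∧
      ∀ᵐ t ∂(volume.restrict (Set.Ioo (0 : ℝ) t₀)), |t * DΦ t| ≤ η * Φ t)
    (σ : ℝ) (hσ : σ < 0) :
    ∃ c : ℝ, 0 < c ∧ ∀ (l : ℕ) (k : Fin (l + 1) → ℕ), StrictMono k →
      ∑ j : Fin (l + 1), (2 : ℝ) ^ (σ * (k j : ℝ)) * Φ ((2 : ℝ) ^ (-(k j : ℝ)))
        ≤ c * ((2 : ℝ) ^ (σ * (k 0 : ℝ)) * Φ ((2 : ℝ) ^ (-(k 0 : ℝ)))) := by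
  have h2pos : (0:ℝ) < 2 := two_pos
  set r : ℝ := (2:ℝ) ^ (σ/2) with hr
  have hr0 : 0 < r := Real.rpow_pos_of_pos h2pos _
  have hr1 : r < 1 := by
    rw [hr]
    exact Real.rpow_lt_one_of_one_lt_of_neg one_lt_two (by linarith)
  set η : ℝ := 1 - r with hηdef
  have hη0 : 0 < η := by rw [hηdef]; linarith
  have hη1 : η < 1 := by rw [hηdef]; linarith
  obtain ⟨t₀, ht₀, hbd⟩ := hlim η hη0
  obtain ⟨N, hN⟩ := exists_pow_lt_of_lt_one ht₀ (by norm_num : (1/2:ℝ) < 1)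
  set f : ℕ → ℝ := fun n => (2:ℝ) ^ (σ * (n:ℝ)) * Φ ((2:ℝ) ^ (-(n:ℝ))) with hf
  have hfpos : ∀ n, 0 < f n := fun n =>
    mul_pos (Real.rpow_pos_of_pos h2pos _) (hpos _ (Real.rpow_pos_of_pos h2pos _))
  have hpowlt : ∀ n : ℕ, N ≤ n → (2:ℝ) ^ (-(n:ℝ)) < t₀ := by
    intro n hn
    have h1 : (2:ℝ) ^ (-(n:ℝ)) ≤ (2:ℝ) ^ (-(N:ℝ)) := by
      apply Real.rpow_le_rpow_of_exponent_le one_le_two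
      simp only [neg_le_neg_iff]
      exact_mod_cast hn
    have h2 : (2:ℝ) ^ (-(N:ℝ)) = (1/2:ℝ)^N := by
      rw [Real.rpow_neg (by norm_num : (0:ℝ) ≤ 2), Real.rpow_natCast]
      simp [one_div, inv_pow]
    calc (2:ℝ)^(-(n:ℝ)) ≤ (2:ℝ)^(-(N:ℝ)) := h1
      _ = (1/2:ℝ)^N := h2
      _ < t₀ := hN
  have hσr : (2:ℝ)^σ = r * r := by
    rw [hr, ← Real.rpow_add h2pos]
    norm_num
  have hstep : ∀ n, N ≤ n → f (n+1) ≤ r * f n := by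
    intro n hn
    have ht : (0:ℝ) < (2:ℝ)^(-(n:ℝ)) := Real.rpow_pos_of_pos h2pos _
    have hΦstep : Φ ((2:ℝ)^(-(n:ℝ)) / 2) ≤ Φ ((2:ℝ)^(-(n:ℝ))) / (1 - η) :=
      step_lemma Φ DΦ t₀ η hη0 hη1 hpos hInt hAC hbd _ ht (hpowlt n hn)
    have hdiv : (2:ℝ) ^ (-((n+1:ℕ):ℝ)) = (2:ℝ)^(-(n:ℝ)) / 2 := by
      push_cast
      rw [show -((n:ℝ)+1) = (-(n:ℝ)) + (-1) by ring, Real.rpow_add h2pos,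
        Real.rpow_neg_one]
      ring
    have hexp : (2:ℝ)^(σ*((n+1:ℕ):ℝ)) = (2:ℝ)^σ * (2:ℝ)^(σ*(n:ℝ)) := by
      push_cast
      rw [← Real.rpow_add h2pos]
      ring_nf
    have h1r : 1 - η = r := by rw [hηdef]; ring
    calc f (n+1) = (2:ℝ)^σ * (2:ℝ)^(σ*(n:ℝ)) * Φ ((2:ℝ)^(-(n:ℝ))/2) := by
          rw [hf]
          simp only
          rw [hexp, hdiv]
      _ ≤ (2:ℝ)^σ * (2:ℝ)^(σ*(n:ℝ)) * (Φ ((2:ℝ)^(-(n:ℝ))) / r) := by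
          apply mul_le_mul_of_nonneg_left _ (by positivity)
          rw [← h1r]
          exact hΦstep
      _ = r * f n := by
          rw [hf, hσr]
          field_simp
  have hchain : ∀ a b : ℕ, N ≤ a → a ≤ b → f b ≤ r ^ (b - a) * f a := by
    intro a b hNa hab
    induction b, hab using Nat.le_induction with
    | base => simp
    | succ b hab ih =>
      have h1 := hstep b (hNa.trans hab)
      have h2 : b + 1 - a = (b - a) + 1 := by omega
      rw [h2, pow_succ]
      calc f (b+1) ≤ r * f b := h1
        _ ≤ r * (r^(b-a) * f a) := mul_le_mul_of_nonneg_left ih hr0.le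
        _ = r^(b-a) * r * f a := by ring
  have hne : (Finset.range (N+1)).Nonempty := ⟨0, by simp⟩
  set A : ℝ := (Finset.range (N+1)).sup' hne f with hA_def
  set m : ℝ := (Finset.range (N+1)).inf' hne f with hm_def
  have hm0 : 0 < m := by
    obtain ⟨i, _, hie⟩ := Finset.exists_mem_eq_inf' hne f
    rw [hm_def, hie]
    exact hfpos i
  have hA : ∀ b, b ≤ N → f b ≤ A := fun b hb =>
    Finset.le_sup' f (Finset.mem_range.2 (by omega))
  have hm : ∀ a, a ≤ N → m ≤ f a := fun a ha =>
    Finset.inf'_le f (Finset.mem_range.2 (by omega))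
  set C : ℝ := max 1 (A / (m * r ^ N)) with hC_def
  have hC1 : (1:ℝ) ≤ C := le_max_left _ _
  have hC0 : 0 < C := lt_of_lt_of_le one_pos hC1
  have hCb : ∀ a b : ℕ, a ≤ b → b ≤ N → f b ≤ C * r^(b-a) * f a := by
    intro a b hab hbN
    have h1 : A / (m * r^N) ≤ C := le_max_right _ _
    have hrN : r^N ≤ r^(b-a) := pow_le_pow_of_le_one hr0.le hr1.le (by omega)
    have hfbA : f b ≤ A := hA b hbN
    have hma : m ≤ f a := hm a (le_trans hab hbN)
    have hmrN : 0 < m * r^N := mul_pos hm0 (pow_pos hr0 N)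
    calc f b ≤ A := hfbA
      _ = A / (m * r^N) * (m * r^N) := by field_simp
      _ ≤ C * (r^(b-a) * f a) := by
          apply mul_le_mul h1 _ hmrN.le hC0.le
          calc m * r^N ≤ f a * r^(b-a) :=
                mul_le_mul hma hrN (pow_nonneg hr0.le N) (hfpos a).le
            _ = r^(b-a) * f a := mul_comm _ _
      _ = C * r^(b-a) * f a := by ring
  have hCall : ∀ a b : ℕ, a ≤ b → f b ≤ C * r^(b-a) * f a := by
    intro a b hab
    rcases le_or_gt b N with hbN | hNb
    · exact hCb a b hab hbN
    rcases le_or_gt N a with hNa | haN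
    · calc f b ≤ r^(b-a) * f a := hchain a b hNa hab
        _ ≤ C * r^(b-a) * f a := by
            nlinarith [pow_nonneg hr0.le (b-a), (hfpos a).le,
              mul_nonneg (pow_nonneg hr0.le (b-a)) (hfpos a).le]
    · have h1 : f N ≤ C * r^(N-a) * f a := hCb a N haN.le le_rfl
      have h2 : f b ≤ r^(b-N) * f N := hchain N b le_rfl hNb.le
      have h3 : r^(b-N) * r^(N-a) = r^(b-a) := by
        rw [← pow_add]
        congr 1
        omega
      calc f b ≤ r^(b-N) * f N := h2
        _ ≤ r^(b-N) * (C * r^(N-a) * f a) :=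
            mul_le_mul_of_nonneg_left h1 (pow_nonneg hr0.le _)
        _ = C * (r^(b-N) * r^(N-a)) * f a := by ring
        _ = C * r^(b-a) * f a := by rw [h3]
  have h1r : (0:ℝ) < 1 - r := by linarith
  refine ⟨C * (1 - r)⁻¹, mul_pos hC0 (inv_pos.2 h1r), ?_⟩
  intro l k hk
  have hk0 : ∀ j : Fin (l+1), k 0 + (j:ℕ) ≤ k j := by
    have key : ∀ p : ℕ, ∀ hp : p < l+1, k 0 + p ≤ k ⟨p, hp⟩ := by
      intro p
      induction p with
      | zero => intro hp; simp
      | succ q ih =>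
        intro hp
        have hq : q < l + 1 := by omega
        have h1 := ih hq
        have h2 : k ⟨q, hq⟩ < k ⟨q+1, hp⟩ := hk (by simp [Fin.mk_lt_mk])
        omega
    intro j
    have := key (j:ℕ) j.isLt
    simpa using this
  have hterm : ∀ j : Fin (l+1), f (k j) ≤ C * r^(j:ℕ) * f (k 0) := by
    intro j
    have h1 : f (k j) ≤ C * r^(k j - k 0) * f (k 0) :=
      hCall (k 0) (k j) (hk.monotone (Fin.zero_le j))
    have h2 : r^(k j - k 0) ≤ r^(j:ℕ) := by
      apply pow_le_pow_of_le_one hr0.le hr1.le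
      have := hk0 j
      omega
    calc f (k j) ≤ C * r^(k j - k 0) * f (k 0) := h1
      _ ≤ C * r^(j:ℕ) * f (k 0) := by
          apply mul_le_mul_of_nonneg_right _ (hfpos _).le
          exact mul_le_mul_of_nonneg_left h2 hC0.le
  have hgeom : ∑ j : Fin (l+1), r^(j:ℕ) ≤ (1-r)⁻¹ := by
    rw [Fin.sum_univ_eq_sum_range]
    exact sum_le_hasSum (Finset.range (l+1)) (fun i _ => pow_nonneg hr0.le i)
      (hasSum_geometric_of_lt_one hr0.le hr1)
  show ∑ j : Fin (l+1), f (k j) ≤ C * (1-r)⁻¹ * f (k 0)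
  calc ∑ j : Fin (l+1), f (k j) ≤ ∑ j : Fin (l+1), C * r^(j:ℕ) * f (k 0) :=
        Finset.sum_le_sum (fun j _ => hterm j)
    _ = (∑ j : Fin (l+1), r^(j:ℕ)) * (C * f (k 0)) := by
        rw [Finset.sum_mul]
        apply Finset.sum_congr rfl
        intro j _
        ring
    _ ≤ (1-r)⁻¹ * (C * f (k 0)) := by
        apply mul_le_mul_of_nonneg_right hgeom
        exact mul_nonneg hC0.le (hfpos _).le
    _ = C * (1-r)⁻¹ * f (k 0) := by ring
end

section
/- Let Φ : (0, ∞) → (0, ∞) be locally absolutely continuous with a.e. derivative satisfying tΦ'(t)/Φ(t) → 0 as t → 0⁺, and let σ > 0. Then there exists a constant c > 0, depending only on σ and Φ, such that for every finite strictly increasing sequence k₀ < k₁ < ⋯ < k_l of nonnegative integers one has ∑_{j=0}^{l} 2^{σ k_j} Φ(2^{−k_j}) ≤ c · 2^{σ k_l} Φ(2^{−k_l}). -/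
open MeasureTheory

lemma doubling (Φ DΦ : ℝ → ℝ)
    (hpos : ∀ t : ℝ, 0 < t → 0 < Φ t)
    (hInt : ∀ s t : ℝ, 0 < s → s ≤ t → IntervalIntegrable DΦ volume s t)
    (hAC : ∀ s t : ℝ, 0 < s → s ≤ t → Φ t - Φ s = ∫ x in s..t, DΦ x)
    (η t₀ : ℝ) (hη : 0 < η)
    (hbd : ∀ᵐ x ∂(volume.restrict (Set.Ioo (0 : ℝ) t₀)), |x * DΦ x| ≤ η * Φ x)
    (t : ℝ) (ht : 0 < t) (h2t : 2 * t < t₀) :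
    (1 - η * Real.log 2) * Φ (2 * t) ≤ Φ t := by
  have ht2 : t ≤ 2 * t := by linarith
  -- continuity of Φ on [t, 2t]
  have hcont : ContinuousOn Φ (Set.Icc t (2 * t)) := by
    have h1 : ContinuousOn (fun x => Φ t + ∫ y in t..x, DΦ y) (Set.Icc t (2 * t)) := by
      refine continuousOn_const.add ?_
      have := intervalIntegral.continuousOn_primitive_interval'
        (hInt t (2 * t) ht ht2) (Set.left_mem_uIcc (a := t) (b := 2 * t))
      rwa [Set.uIcc_of_le ht2] at this
    refine h1.congr fun x hx => ?_
    have := hAC t x ht hx.1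
    linarith
  obtain ⟨x₀, hx₀mem, hx₀max⟩ :=
    (isCompact_Icc (a := t) (b := 2 * t)).exists_isMaxOn ⟨t, le_refl t, ht2⟩ hcont
  have hmax : ∀ x ∈ Set.Icc t (2 * t), Φ x ≤ Φ x₀ := hx₀max
  have htx₀ : t ≤ x₀ := hx₀mem.1
  have hx₀2t : x₀ ≤ 2 * t := hx₀mem.2
  have hMpos : 0 < Φ x₀ := hpos x₀ (lt_of_lt_of_le ht htx₀)
  set M := Φ x₀ with hM
  -- a.e. bound on the interval
  have hsub : Set.Icc t x₀ ⊆ Set.Ioo (0 : ℝ) t₀ := fun x hx =>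
    ⟨lt_of_lt_of_le ht hx.1, lt_of_le_of_lt (hx.2.trans hx₀2t) h2t⟩
  have hbd' : ∀ᵐ x ∂(volume.restrict (Set.Icc t x₀)), |x * DΦ x| ≤ η * Φ x :=
    ae_mono (Measure.restrict_mono hsub le_rfl) hbd
  have hmem : ∀ᵐ x ∂(volume.restrict (Set.Icc t x₀)), x ∈ Set.Icc t x₀ :=
    ae_restrict_mem measurableSet_Icc
  have hptwise : ∀ᵐ x ∂(volume.restrict (Set.Icc t x₀)), DΦ x ≤ η * M / x := by
    filter_upwards [hbd', hmem] with x h1 h2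
    have hx0 : 0 < x := lt_of_lt_of_le ht h2.1
    have hΦx : Φ x ≤ M := hmax x ⟨h2.1, h2.2.trans hx₀2t⟩
    have : x * DΦ x ≤ η * Φ x := le_trans (le_abs_self _) h1
    have h3 : x * DΦ x ≤ η * M := this.trans (by nlinarith)
    rw [div_eq_mul_inv, ← mul_le_mul_iff_right₀ hx0]
    calc x * DΦ x ≤ η * M := h3
    _ = x * (η * M * x⁻¹) := by field_simp
  -- integral bound
  have hIntg : IntervalIntegrable (fun x => η * M / x) volume t x₀ := by
    apply ContinuousOn.intervalIntegrable
    apply ContinuousOn.div continuousOn_const continuousOn_id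
    intro x hx
    rw [Set.uIcc_of_le htx₀] at hx
    exact ne_of_gt (lt_of_lt_of_le ht hx.1)
  have key : Φ x₀ - Φ t ≤ η * M * Real.log 2 := by
    rw [hAC t x₀ ht htx₀]
    have h1 : (∫ x in t..x₀, DΦ x) ≤ ∫ x in t..x₀, η * M / x :=
      intervalIntegral.integral_mono_ae_restrict htx₀ (hInt t x₀ ht htx₀) hIntg hptwise
    have h2 : (∫ x in t..x₀, η * M / x) = η * M * Real.log (x₀ / t) := by
      have h0 : (0 : ℝ) ∉ Set.uIcc t x₀ := by
        rw [Set.uIcc_of_le htx₀]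
        intro h; exact absurd h.1 (not_le.mpr ht)
      rw [show (fun x => η * M / x) = fun x => (η * M) * (1 / x) by funext x; ring]
      rw [intervalIntegral.integral_const_mul, integral_one_div h0]
    have h3 : Real.log (x₀ / t) ≤ Real.log 2 := by
      apply Real.log_le_log (div_pos (lt_of_lt_of_le ht htx₀) ht)
      rw [div_le_iff₀ ht]; linarith
    have h4 : 0 ≤ η * M := by positivity
    calc (∫ x in t..x₀, DΦ x) ≤ η * M * Real.log (x₀ / t) := h2 ▸ h1
    _ ≤ η * M * Real.log 2 := by nlinarith
  have hΦ2t : Φ (2 * t) ≤ M := hmax _ ⟨ht2, le_refl _⟩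
  rcases le_or_gt (1 - η * Real.log 2) 0 with h | h
  · have h1 := hpos t ht
    have h2 := hpos (2 * t) (by linarith)
    nlinarith
  · have h1 : (1 - η * Real.log 2) * Φ (2 * t) ≤ (1 - η * Real.log 2) * M :=
      mul_le_mul_of_nonneg_left hΦ2t h.le
    nlinarith [key]

/-- For `Φ : (0,∞) → (0,∞)` locally absolutely continuous with
`t·Φ'(t)/Φ(t) → 0` as `t → 0⁺` and `σ > 0`, the sum `∑_j 2^(σ k_j) Φ(2^(−k_j))` over a
strictly increasing finite sequence of nonnegative integers is bounded by a constant
(depending only on `σ`, `Φ`) times the last term. -/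
theorem statement4 (Φ DΦ : ℝ → ℝ)
    (hpos : ∀ t : ℝ, 0 < t → 0 < Φ t)
    (hInt : ∀ s t : ℝ, 0 < s → s ≤ t → IntervalIntegrable DΦ volume s t)
    (hAC : ∀ s t : ℝ, 0 < s → s ≤ t → Φ t - Φ s = ∫ x in s..t, DΦ x)
    (hlim : ∀ η : ℝ, 0 < η → ∃ t₀ : ℝ, 0 < t₀ ∧
      ∀ᵐ t ∂(volume.restrict (Set.Ioo (0 : ℝ) t₀)), |t * DΦ t| ≤ η * Φ t)
    (σ : ℝ) (hσ : 0 < σ) :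
    ∃ c : ℝ, 0 < c ∧ ∀ (l : ℕ) (k : Fin (l + 1) → ℕ), StrictMono k →
      ∑ j : Fin (l + 1), (2 : ℝ) ^ (σ * (k j : ℝ)) * Φ ((2 : ℝ) ^ (-(k j : ℝ)))
        ≤ c * ((2 : ℝ) ^ (σ * (k (Fin.last l) : ℝ)) * Φ ((2 : ℝ) ^ (-(k (Fin.last l) : ℝ)))) := by
  have h2pos : (0:ℝ) < 2 := by norm_num
  set ρ : ℝ := (2:ℝ) ^ (σ / 2) with hρdef
  have hρ1 : 1 < ρ := by
    rw [hρdef]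
    exact (Real.one_lt_rpow_iff_of_pos h2pos).mpr (Or.inl ⟨by norm_num, by linarith⟩)
  have hρ0 : 0 < ρ := lt_trans one_pos hρ1
  have hρinv1 : ρ⁻¹ < 1 := inv_lt_one_of_one_lt₀ hρ1
  have hρinv0 : 0 < ρ⁻¹ := inv_pos.mpr hρ0
  have hlog2 : 0 < Real.log 2 := Real.log_pos (by norm_num)
  set η : ℝ := (1 - ρ⁻¹) / Real.log 2 with hηdef
  have hη : 0 < η := div_pos (by linarith) hlog2
  obtain ⟨t₀, ht₀, hbd⟩ := hlim η hη
  have hηlog : 1 - η * Real.log 2 = ρ⁻¹ := by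
    rw [hηdef, div_mul_cancel₀ _ (ne_of_gt hlog2)]; ring
  -- doubling in convenient form
  have hdbl : ∀ t : ℝ, 0 < t → 2 * t < t₀ → Φ (2 * t) ≤ ρ * Φ t := by
    intro t ht h2t
    have := doubling Φ DΦ hpos hInt hAC η t₀ hη hbd t ht h2t
    rw [hηlog] at this
    calc Φ (2 * t) = ρ * (ρ⁻¹ * Φ (2 * t)) := by field_simp
    _ ≤ ρ * Φ t := mul_le_mul_of_nonneg_left this hρ0.le
  -- choose K with 2^(-K) < t₀
  obtain ⟨K, hK⟩ := exists_pow_lt_of_lt_one ht₀ (by norm_num : (1/2 : ℝ) < 1)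
  have hpow : ∀ n : ℕ, (2:ℝ) ^ (-(n:ℝ)) = (1/2 : ℝ) ^ n := by
    intro n
    rw [Real.rpow_neg h2pos.le, Real.rpow_natCast, ← inv_pow, one_div]
  set f : ℕ → ℝ := fun n => (2:ℝ) ^ (σ * (n:ℝ)) * Φ ((2:ℝ) ^ (-(n:ℝ))) with hfdef
  have hfpos : ∀ n, 0 < f n := fun n =>
    mul_pos (Real.rpow_pos_of_pos h2pos _) (hpos _ (Real.rpow_pos_of_pos h2pos _))
  -- step
  have hstep : ∀ n : ℕ, K ≤ n → ρ * f n ≤ f (n + 1) := by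
    intro n hn
    have harg : (2:ℝ) * (2:ℝ) ^ (-((n:ℝ) + 1)) = (2:ℝ) ^ (-(n:ℝ)) := by
      calc (2:ℝ) * (2:ℝ) ^ (-((n:ℝ) + 1)) = (2:ℝ)^(1:ℝ) * (2:ℝ) ^ (-((n:ℝ) + 1)) := by
            rw [Real.rpow_one]
      _ = (2:ℝ) ^ ((1:ℝ) + -((n:ℝ)+1)) := (Real.rpow_add h2pos _ _).symm
      _ = (2:ℝ) ^ (-(n:ℝ)) := by congr 1; ring
    have htpos : (0:ℝ) < (2:ℝ) ^ (-((n:ℝ) + 1)) := Real.rpow_pos_of_pos h2pos _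
    have hlt : 2 * (2:ℝ) ^ (-((n:ℝ) + 1)) < t₀ := by
      rw [harg]
      calc (2:ℝ) ^ (-(n:ℝ)) = (1/2:ℝ)^n := hpow n
      _ ≤ (1/2:ℝ)^K := pow_le_pow_of_le_one (by norm_num) (by norm_num) hn
      _ < t₀ := hK
    have hΦ : Φ ((2:ℝ) ^ (-(n:ℝ))) ≤ ρ * Φ ((2:ℝ) ^ (-((n:ℝ)+1))) := by
      have := hdbl _ htpos hlt
      rwa [harg] at this
    have hcast : -((n:ℝ)+1) = -(((n+1 : ℕ)):ℝ) := by push_cast; ring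
    have hrw : ρ * (ρ * (2:ℝ) ^ (σ * (n:ℝ))) = (2:ℝ) ^ (σ * (((n+1):ℕ):ℝ)) := by
      rw [hρdef, ← Real.rpow_add h2pos, ← Real.rpow_add h2pos]
      congr 1; push_cast; ring
    calc ρ * f n = ρ * ((2:ℝ) ^ (σ * (n:ℝ)) * Φ ((2:ℝ) ^ (-(n:ℝ)))) := rfl
    _ ≤ ρ * ((2:ℝ) ^ (σ * (n:ℝ)) * (ρ * Φ ((2:ℝ) ^ (-((n:ℝ)+1))))) := by
        apply mul_le_mul_of_nonneg_left _ hρ0.le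
        exact mul_le_mul_of_nonneg_left hΦ (Real.rpow_pos_of_pos h2pos _).le
    _ = ρ * (ρ * (2:ℝ) ^ (σ * (n:ℝ))) * Φ ((2:ℝ) ^ (-((n:ℝ)+1))) := by ring
    _ = f (n+1) := by rw [hrw, hfdef]; simp only []; rw [hcast]
  -- iterate
  have hiter : ∀ d n : ℕ, K ≤ n → ρ ^ d * f n ≤ f (n + d) := by
    intro d
    induction d with
    | zero => intro n _; simp
    | succ d ih =>
      intro n hn
      have h1 : ρ ^ (d+1) * f n = ρ * (ρ ^ d * f n) := by ring
      rw [h1]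
      calc ρ * (ρ ^ d * f n) ≤ ρ * f (n + d) :=
            mul_le_mul_of_nonneg_left (ih n hn) hρ0.le
      _ ≤ f (n + d + 1) := hstep (n + d) (le_trans hn (Nat.le_add_right n d))
      _ = f (n + (d+1)) := by ring_nf
  have hiter' : ∀ n m : ℕ, K ≤ n → n ≤ m → f n ≤ ρ⁻¹ ^ (m - n) * f m := by
    intro n m hKn hnm
    have h := hiter (m - n) n hKn
    rw [Nat.add_sub_cancel' hnm] at h
    have hd : (0:ℝ) < ρ ^ (m - n) := pow_pos hρ0 _
    rw [inv_pow]
    calc f n = (ρ ^ (m-n))⁻¹ * (ρ ^ (m-n) * f n) := by field_simp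
    _ ≤ (ρ ^ (m-n))⁻¹ * f m := mul_le_mul_of_nonneg_left h (inv_nonneg.mpr hd.le)
  -- constants
  have hne : (Finset.range (K+1)).Nonempty := Finset.nonempty_range_add_one
  set Mx : ℝ := (Finset.range (K+1)).sup' hne f with hMxdef
  set m₀ : ℝ := (Finset.range (K+1)).inf' hne f with hm₀def
  have hm₀pos : 0 < m₀ := by
    rw [hm₀def, Finset.lt_inf'_iff]
    exact fun b _ => hfpos b
  have hfleMx : ∀ n, n ≤ K → f n ≤ Mx := fun n hn =>
    Finset.le_sup' f (Finset.mem_range.mpr (Nat.lt_succ_of_le hn))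
  have hm₀lef : ∀ n, n ≤ K → m₀ ≤ f n := fun n hn =>
    Finset.inf'_le f (Finset.mem_range.mpr (Nat.lt_succ_of_le hn))
  have hmM : m₀ ≤ Mx := le_trans (hm₀lef 0 (Nat.zero_le K)) (hfleMx 0 (Nat.zero_le K))
  set D : ℝ := (Mx / m₀) * ρ ^ K with hDdef
  have hD1 : 1 ≤ D := by
    rw [hDdef]
    have h1 : 1 ≤ Mx / m₀ := (one_le_div hm₀pos).mpr hmM
    have h2 : (1:ℝ) ≤ ρ ^ K := one_le_pow₀ hρ1.le
    nlinarith
  have hDpos : 0 < D := lt_of_lt_of_le one_pos hD1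
  -- main claim
  have claim : ∀ n m : ℕ, n ≤ m → f n ≤ D * ρ⁻¹ ^ (m - n) * f m := by
    intro n m hnm
    by_cases hKn : K ≤ n
    · have h := hiter' n m hKn hnm
      calc f n ≤ ρ⁻¹ ^ (m - n) * f m := h
      _ ≤ D * ρ⁻¹ ^ (m - n) * f m := by
          rw [mul_assoc]
          exact le_mul_of_one_le_left (mul_nonneg (pow_nonneg hρinv0.le _) (hfpos m).le) hD1
    · push_neg at hKn
      by_cases hm : m ≤ K
      · -- both ≤ K
        have h1 : f n ≤ Mx := hfleMx n hKn.le
        have h2 : m₀ ≤ f m := hm₀lef m hm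
        have h3 : ρ⁻¹ ^ K ≤ ρ⁻¹ ^ (m - n) :=
          pow_le_pow_of_le_one hρinv0.le hρinv1.le (le_trans (Nat.sub_le m n) hm)
        have h4 : D * ρ⁻¹ ^ K * m₀ = Mx := by
          rw [hDdef, inv_pow]
          field_simp
        calc f n ≤ Mx := h1
        _ = D * ρ⁻¹ ^ K * m₀ := h4.symm
        _ ≤ D * ρ⁻¹ ^ (m - n) * m₀ := by
            apply mul_le_mul_of_nonneg_right _ hm₀pos.le
            exact mul_le_mul_of_nonneg_left h3 hDpos.le
        _ ≤ D * ρ⁻¹ ^ (m - n) * f m :=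
            mul_le_mul_of_nonneg_left h2 (mul_nonneg hDpos.le (pow_nonneg hρinv0.le _))
      · push_neg at hm
        have hKm : K ≤ m := hm.le
        have h1 : f n ≤ Mx := hfleMx n hKn.le
        have h2 : f K ≤ ρ⁻¹ ^ (m - K) * f m := hiter' K m le_rfl hKm
        have h3 : Mx ≤ (Mx / m₀) * f K := by
          have := hm₀lef K le_rfl
          rw [div_mul_eq_mul_div, le_div_iff₀ hm₀pos]
          nlinarith [hfleMx 0 (Nat.zero_le K), hm₀pos, hfpos 0]
        have h5 : ρ ^ K * ρ⁻¹ ^ (K - n) = ρ ^ n := by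
          have hKn' : n + (K - n) = K := Nat.add_sub_cancel' hKn.le
          rw [inv_pow, ← hKn', pow_add]
          field_simp
          rw [Nat.add_sub_cancel_left]
        have h6 : ρ⁻¹ ^ (m - n) = ρ⁻¹ ^ (m - K) * ρ⁻¹ ^ (K - n) := by
          rw [← pow_add]
          congr 1
          omega
        have h7 : (Mx / m₀) * ρ⁻¹ ^ (m - K) ≤ D * ρ⁻¹ ^ (m - n) := by
          rw [hDdef, h6]
          have : (1:ℝ) ≤ ρ ^ n := one_le_pow₀ hρ1.le
          calc (Mx / m₀) * ρ⁻¹ ^ (m - K)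
              = (Mx / m₀) * ρ⁻¹ ^ (m - K) * 1 := by ring
          _ ≤ (Mx / m₀) * ρ⁻¹ ^ (m - K) * ρ ^ n := by
              apply mul_le_mul_of_nonneg_left this
              exact mul_nonneg (div_nonneg (le_trans hm₀pos.le hmM) hm₀pos.le) (pow_nonneg hρinv0.le _)
          _ = Mx / m₀ * ρ ^ K * (ρ⁻¹ ^ (m - K) * ρ⁻¹ ^ (K - n)) := by
              rw [← h5]; ring
        calc f n ≤ Mx := h1
        _ ≤ (Mx / m₀) * f K := h3
        _ ≤ (Mx / m₀) * (ρ⁻¹ ^ (m - K) * f m) := by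
            apply mul_le_mul_of_nonneg_left h2
            exact div_nonneg (le_trans hm₀pos.le hmM) hm₀pos.le
        _ = (Mx / m₀) * ρ⁻¹ ^ (m - K) * f m := by ring
        _ ≤ D * ρ⁻¹ ^ (m - n) * f m := mul_le_mul_of_nonneg_right h7 (hfpos m).le
  -- conclude
  refine ⟨D * (1 - ρ⁻¹)⁻¹, mul_pos hDpos (inv_pos.mpr (by linarith)), ?_⟩
  intro l k hk
  set kl : ℕ := k (Fin.last l) with hkl
  have hkj : ∀ j : Fin (l+1), k j ≤ kl := fun j => hk.monotone (Fin.le_last j)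
  have hterm : ∀ j : Fin (l+1), f (k j) ≤ D * ρ⁻¹ ^ (kl - k j) * f kl :=
    fun j => claim (k j) kl (hkj j)
  have hS : (∑ j : Fin (l+1), ρ⁻¹ ^ (kl - k j)) ≤ (1 - ρ⁻¹)⁻¹ := by
    have hinj : Set.InjOn (fun j : Fin (l+1) => kl - k j) (Finset.univ : Finset (Fin (l+1))) := by
      intro i _ j _ hij
      simp only at hij
      have hi := hkj i
      have hj := hkj j
      have : k i = k j := by omega
      exact hk.injective this
    have himg : (Finset.univ.image (fun j : Fin (l+1) => kl - k j)) ⊆ Finset.range (kl + 1) := by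
      intro n hn
      simp only [Finset.mem_image] at hn
      obtain ⟨j, _, hj⟩ := hn
      rw [Finset.mem_range]
      omega
    calc (∑ j : Fin (l+1), ρ⁻¹ ^ (kl - k j))
        = ∑ n ∈ Finset.univ.image (fun j : Fin (l+1) => kl - k j), ρ⁻¹ ^ n := by
          rw [Finset.sum_image (fun i hi j hj h => hinj hi hj h)]
    _ ≤ ∑ n ∈ Finset.range (kl + 1), ρ⁻¹ ^ n :=
          Finset.sum_le_sum_of_subset_of_nonneg himg
            (fun n _ _ => pow_nonneg hρinv0.le n)
    _ ≤ ∑' n : ℕ, ρ⁻¹ ^ n :=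
          Summable.sum_le_tsum _ (fun n _ => pow_nonneg hρinv0.le n)
            (summable_geometric_of_lt_one hρinv0.le hρinv1)
    _ = (1 - ρ⁻¹)⁻¹ := tsum_geometric_of_lt_one hρinv0.le hρinv1
  calc (∑ j : Fin (l+1), f (k j)) ≤ ∑ j : Fin (l+1), D * ρ⁻¹ ^ (kl - k j) * f kl :=
        Finset.sum_le_sum fun j _ => hterm j
  _ = D * f kl * ∑ j : Fin (l+1), ρ⁻¹ ^ (kl - k j) := by
      rw [Finset.mul_sum]; congr 1; funext j; ring
  _ ≤ D * f kl * (1 - ρ⁻¹)⁻¹ := by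
      apply mul_le_mul_of_nonneg_left hS
      exact mul_nonneg hDpos.le (hfpos kl).le
  _ = D * (1 - ρ⁻¹)⁻¹ * f kl := by ring
end

section
/- Let ρ : (0, ∞) → (0, ∞) be locally absolutely continuous with a.e. derivative satisfying yρ'(y)/ρ(y) → 0 as y → ∞, and let μ < −1. Then there exists a constant c > 0, depending only on μ and ρ, such that for every finite strictly increasing sequence 1 ≤ k₀ < k₁ < ⋯ < k_l of positive integers one has ∑_{j=0}^{l} k_j^{μ} ρ(k_j) ≤ c · k₀^{1+μ} ρ(k₀). -/
open MeasureTheory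

private lemma aux_step {σ : ℝ} (hσ : σ < -1) {a : ℝ} (ha : 1 ≤ a) :
    (-σ - 1) * (a + 1) ^ σ ≤ a ^ (σ + 1) - (a + 1) ^ (σ + 1) := by
  have ha0 : (0:ℝ) < a := lt_of_lt_of_le one_pos ha
  have h0 : (0:ℝ) ∉ Set.uIcc a (a + 1) := by
    rw [Set.uIcc_of_le (by linarith)]
    rintro ⟨h1, -⟩; linarith
  have hint : IntervalIntegrable (fun x : ℝ => x ^ σ) volume a (a + 1) :=
    intervalIntegral.intervalIntegrable_rpow (Or.inr h0)
  have hmono : (a + 1) ^ σ ≤ ∫ x in a..(a + 1), x ^ σ := by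
    have h := intervalIntegral.integral_mono_on (by linarith : a ≤ a + 1)
      (intervalIntegrable_const (c := (a + 1) ^ σ)) hint
      (fun x hx => Real.rpow_le_rpow_of_nonpos
        (by linarith [hx.1] : (0:ℝ) < x) hx.2 (by linarith))
    simpa using h
  rw [integral_rpow (Or.inr ⟨by intro h; linarith, h0⟩)] at hmono
  have hσ1 : σ + 1 < 0 := by linarith
  have := (le_div_iff_of_neg hσ1).mp hmono
  linarith

private lemma aux_sum {σ : ℝ} (hσ : σ < -1) {m : ℝ} (hm : 1 ≤ m) (l : ℕ) :
    ∑ j ∈ Finset.range (l + 1), (m + j) ^ σ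
      ≤ m ^ σ + (m ^ (σ + 1) - (m + l) ^ (σ + 1)) / (-σ - 1) := by
  have hc : (0:ℝ) < -σ - 1 := by linarith
  induction l with
  | zero => simp
  | succ n ih =>
    rw [Finset.sum_range_succ]
    push_cast
    have hmn : (1:ℝ) ≤ m + n := by
      have h0n : (0:ℝ) ≤ (n:ℝ) := Nat.cast_nonneg n
      linarith
    have step := aux_step hσ hmn
    have hd : (m + ↑n + 1:ℝ) ^ σ ≤ ((m + ↑n) ^ (σ + 1) - (m + ↑n + 1) ^ (σ + 1)) / (-σ - 1) := by
      rw [le_div_iff₀ hc]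
      nlinarith [step]
    have heq : (m ^ (σ + 1) - (m + ↑n) ^ (σ + 1)) / (-σ - 1)
        + ((m + ↑n) ^ (σ + 1) - (m + ↑n + 1) ^ (σ + 1)) / (-σ - 1)
        = (m ^ (σ + 1) - (m + ↑n + 1) ^ (σ + 1)) / (-σ - 1) := by ring
    have hb : m + ((n:ℝ) + 1) = m + (n:ℝ) + 1 := by ring
    rw [hb]
    linarith [ih]

private lemma fin_strictMono_le {n : ℕ} {f : Fin (n + 1) → ℕ} (hf : StrictMono f) :
    ∀ j : Fin (n + 1), f 0 + (j : ℕ) ≤ f j := by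
  rintro ⟨m, hm⟩
  induction m with
  | zero => simp [show (⟨0, hm⟩ : Fin (n+1)) = 0 from rfl]
  | succ i ih =>
    have hi : i < n + 1 := Nat.lt_of_succ_lt hm
    have h1 := ih hi
    have h2 : f ⟨i, hi⟩ < f ⟨i + 1, hm⟩ := hf (by simp [Fin.lt_def])
    simp only [Fin.val_mk] at h1 ⊢
    omega

set_option maxHeartbeats 1000000 in
/-- For `ρ : (0,∞) → (0,∞)` locally absolutely continuous with
`y·ρ'(y)/ρ(y) → 0` as `y → ∞` and `μ < −1`, the sum `∑_j k_j^μ ρ(k_j)` over a strictly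
increasing finite sequence of positive integers is bounded by
`c · k₀^(1+μ) ρ(k₀)` with `c` depending only on `μ` and `ρ`. -/
theorem statement5 (ρ Dρ : ℝ → ℝ)
    (hpos : ∀ t : ℝ, 0 < t → 0 < ρ t)
    (hInt : ∀ s t : ℝ, 0 < s → s ≤ t → IntervalIntegrable Dρ volume s t)
    (hAC : ∀ s t : ℝ, 0 < s → s ≤ t → ρ t - ρ s = ∫ x in s..t, Dρ x)
    (hlim : ∀ η : ℝ, 0 < η → ∃ y₀ : ℝ, 0 < y₀ ∧
      ∀ᵐ y ∂(volume.restrict (Set.Ioi y₀)), |y * Dρ y| ≤ η * ρ y)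
    (μ : ℝ) (hμ : μ < -1) :
    ∃ c : ℝ, 0 < c ∧ ∀ (l : ℕ) (k : Fin (l + 1) → ℕ), StrictMono k → 1 ≤ k 0 →
      ∑ j : Fin (l + 1), (k j : ℝ) ^ μ * ρ (k j)
        ≤ c * ((k 0 : ℝ) ^ (1 + μ) * ρ (k 0)) := by
  set η : ℝ := (-1 - μ) / 2 with hη_def
  have hη : 0 < η := by rw [hη_def]; linarith
  obtain ⟨y₀, hy₀, hae⟩ := hlim η hη
  set a : ℝ := max y₀ 1 + 1 with ha_def
  have ha1 : 1 ≤ a := by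
    have := le_max_right y₀ 1; rw [ha_def]; linarith
  have ha0 : 0 < a := lt_of_lt_of_le one_pos ha1
  have hay : y₀ < a := by
    have := le_max_left y₀ 1; rw [ha_def]; linarith
  -- continuity of ρ on (0, ∞)
  have hcontAt : ∀ x : ℝ, 0 < x → ContinuousAt ρ x := by
    intro x hx
    have hc2 : 0 < x / 2 := by linarith
    have hmem : Set.Icc (x / 2) (x + 1) ∈ nhds x := Icc_mem_nhds (by linarith) (by linarith)
    have hle : x / 2 ≤ x + 1 := by linarith
    have hint : IntegrableOn Dρ (Set.uIcc (x / 2) (x + 1)) volume := by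
      rw [Set.uIcc_of_le hle]
      exact (intervalIntegrable_iff_integrableOn_Icc_of_le hle).mp (hInt _ _ hc2 hle)
    have hFcont : ContinuousOn (fun y => ρ (x / 2) + ∫ t in (x/2)..y, Dρ t)
        (Set.Icc (x / 2) (x + 1)) := by
      have := intervalIntegral.continuousOn_primitive_interval (a := x/2) (b := x+1) (f := Dρ) (μ := volume) hint
      rw [Set.uIcc_of_le hle] at this
      exact continuousOn_const.add this
    have heq : Set.EqOn ρ (fun y => ρ (x / 2) + ∫ t in (x/2)..y, Dρ t)
        (Set.Icc (x / 2) (x + 1)) := by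
      intro y hy
      have := hAC (x / 2) y hc2 hy.1
      simp only []
      linarith [this]
    exact ((hFcont.congr heq).continuousAt hmem)
  have hcontOn : ContinuousOn ρ (Set.Ioi 0) :=
    fun x hx => (hcontAt x hx).continuousWithinAt
  set g : ℝ → ℝ := fun y => ρ y / y with hg_def
  have hg_cont : ContinuousOn g (Set.Ioi 0) :=
    hcontOn.div continuousOn_id (fun y hy => ne_of_gt hy)
  -- Gronwall-type estimate above a
  have key : ∀ s t : ℝ, a ≤ s → s ≤ t → ρ t ≤ ρ s * (t / s) ^ η := by
    intro s t has hst
    have hs0 : 0 < s := lt_of_lt_of_le ha0 has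
    have ht0 : 0 < t := lt_of_lt_of_le hs0 hst
    have hsubIoi : ∀ {u v : ℝ}, s ≤ u → Set.Icc u v ⊆ Set.Ioi (0:ℝ) := by
      intro u v hu y hy; exact lt_of_lt_of_le hs0 (le_trans hu hy.1)
    -- a.e. bound on Ioc s t
    have hae' : ∀ᵐ y ∂(volume.restrict (Set.Ioc s t)), Dρ y ≤ η * g y := by
      have hsub : Set.Ioc s t ⊆ Set.Ioi y₀ := by
        intro y hy; exact lt_trans (lt_of_lt_of_le hay has) (lt_of_le_of_lt le_rfl hy.1)
      have h1 : ∀ᵐ y ∂(volume.restrict (Set.Ioc s t)), |y * Dρ y| ≤ η * ρ y :=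
        ae_restrict_of_ae_restrict_of_subset hsub hae
      filter_upwards [h1, ae_restrict_mem measurableSet_Ioc] with y hy hymem
      have hy0 : 0 < y := lt_of_lt_of_le hs0 (le_of_lt hymem.1)
      have habs : |Dρ y| ≤ η * ρ y / y := by
        rw [le_div_iff₀ hy0]
        calc |Dρ y| * y = |y * Dρ y| := by
              rw [abs_mul, abs_of_pos hy0]; ring
          _ ≤ η * ρ y := hy
      calc Dρ y ≤ |Dρ y| := le_abs_self _
        _ ≤ η * ρ y / y := habs
        _ = η * g y := by rw [hg_def]; ring
    have hg_int : ∀ x, s ≤ x → x ≤ t → IntervalIntegrable g volume s x := by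
      intro x hx1 hx2
      apply ContinuousOn.intervalIntegrable
      rw [Set.uIcc_of_le hx1]
      exact hg_cont.mono (hsubIoi le_rfl)
    -- ρ ≤ F on [s, t]
    set F : ℝ → ℝ := fun x => ρ s + η * ∫ u in s..x, g u with hF_def
    have hρF : ∀ x ∈ Set.Icc s t, ρ x ≤ F x := by
      rintro x ⟨hx1, hx2⟩
      have hACx := hAC s x hs0 hx1
      have hmono : (∫ u in s..x, Dρ u) ≤ ∫ u in s..x, η * g u := by
        apply intervalIntegral.integral_mono_ae_restrict hx1 (hInt s x hs0 hx1)
          ((hg_int x hx1 hx2).const_mul η)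
        have hIccIoc : volume.restrict (Set.Icc s x) = volume.restrict (Set.Ioc s x) :=
          (Measure.restrict_congr_set Ioc_ae_eq_Icc).symm
        rw [hIccIoc]
        exact ae_restrict_of_ae_restrict_of_subset (Set.Ioc_subset_Ioc_right hx2) hae'
      have : (∫ u in s..x, η * g u) = η * ∫ u in s..x, g u :=
        intervalIntegral.integral_const_mul η g
      rw [hF_def]
      simp only []
      linarith [hACx, hmono, this.ge, this.le]
    -- G := F x * x^(-η) is antitone on [s,t]
    set G : ℝ → ℝ := fun x => F x * x ^ (-η) with hG_def
    have hG_deriv : ∀ x ∈ Set.Ioo s t,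
        HasDerivAt G (η * g x * x ^ (-η) + F x * (-η * x ^ (-η - 1))) x := by
      rintro x ⟨hx1, hx2⟩
      have hx0 : 0 < x := lt_trans hs0 hx1
      have hF' : HasDerivAt F (η * g x) x := by
        have hFTC := intervalIntegral.integral_hasDerivAt_right
          (hg_int x hx1.le hx2.le)
          (hg_cont.stronglyMeasurableAtFilter isOpen_Ioi x hx0)
          ((hg_cont x hx0).continuousAt (Ioi_mem_nhds hx0))
        exact (hFTC.const_mul η).const_add (ρ s)
      have hp : HasDerivAt (fun y : ℝ => y ^ (-η)) (-η * x ^ (-η - 1)) x := by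
        simpa using Real.hasDerivAt_rpow_const (p := -η) (Or.inl (ne_of_gt hx0))
      exact hF'.mul hp
    have hF_cont : ContinuousOn F (Set.Icc s t) := by
      have hint : IntegrableOn g (Set.uIcc s t) volume := by
        rw [Set.uIcc_of_le hst]
        exact (hg_cont.mono (hsubIoi le_rfl)).integrableOn_Icc
      have := intervalIntegral.continuousOn_primitive_interval (a := s) (b := t) (f := g) (μ := volume) hint
      rw [Set.uIcc_of_le hst] at this
      exact continuousOn_const.add (this.const_smul η)
    have hG_cont : ContinuousOn G (Set.Icc s t) := by
      apply hF_cont.mul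
      intro x hx
      have hx0 : 0 < x := lt_of_lt_of_le hs0 hx.1
      exact (Real.continuousAt_rpow_const x (-η) (Or.inl (ne_of_gt hx0))).continuousWithinAt
    have hG_anti : AntitoneOn G (Set.Icc s t) := by
      apply antitoneOn_of_deriv_nonpos (convex_Icc s t) hG_cont
      · rw [interior_Icc]
        exact fun x hx => (hG_deriv x hx).differentiableAt.differentiableWithinAt
      · rw [interior_Icc]
        intro x hx
        rw [(hG_deriv x hx).deriv]
        have hx0 : 0 < x := lt_trans hs0 hx.1
        have hle := hρF x ⟨hx.1.le, hx.2.le⟩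
        have hpow : x ^ (-η) = x ^ (-η - 1) * x := by
          rw [← Real.rpow_add_one (ne_of_gt hx0)]; ring_nf
        have hgx : g x = ρ x / x := rfl
        have hpowpos : 0 < x ^ (-η - 1) := Real.rpow_pos_of_pos hx0 _
        have h1 : η * g x * x ^ (-η) = η * ρ x * x ^ (-η - 1) := by
          rw [hgx, hpow]; field_simp
        rw [h1]
        linarith [mul_le_mul_of_nonneg_left
          (mul_le_mul_of_nonneg_right hle hpowpos.le) hη.le]
    have hGst : G t ≤ G s := hG_anti (Set.left_mem_Icc.mpr hst) (Set.right_mem_Icc.mpr hst) hst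
    have hGs : G s = ρ s * s ^ (-η) := by
      rw [hG_def, hF_def]; simp
    have hρt : ρ t ≤ F t := hρF t (Set.right_mem_Icc.mpr hst)
    have htpow : 0 < (t:ℝ) ^ η := Real.rpow_pos_of_pos ht0 _
    have hGt : G t = F t * t ^ (-η) := rfl
    have hFt : F t = G t * t ^ η := by
      rw [hGt, mul_assoc, ← Real.rpow_add ht0]
      simp
    have hfinal : ρ s * s ^ (-η) * t ^ η = ρ s * (t / s) ^ η := by
      rw [Real.div_rpow ht0.le hs0.le, Real.rpow_neg hs0.le]
      field_simp
    calc ρ t ≤ F t := hρt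
      _ = G t * t ^ η := hFt
      _ ≤ G s * t ^ η := by nlinarith [hGst, htpow]
      _ = ρ s * (t / s) ^ η := by rw [hGs, hfinal]
  -- bounds on [1, a]
  have hsub1a : Set.Icc (1:ℝ) a ⊆ Set.Ioi 0 := fun y hy => lt_of_lt_of_le one_pos hy.1
  have hne : (Set.Icc (1:ℝ) a).Nonempty := ⟨1, Set.left_mem_Icc.mpr ha1⟩
  obtain ⟨xM, hxM, hM⟩ := isCompact_Icc.exists_isMaxOn hne (hcontOn.mono hsub1a)
  obtain ⟨xm, hxm, hm⟩ := isCompact_Icc.exists_isMinOn hne (hcontOn.mono hsub1a)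
  set M := ρ xM with hM_def
  set m := ρ xm with hm_def
  have hm0 : 0 < m := hpos xm (hsub1a hxm)
  have hM0 : 0 < M := hpos xM (hsub1a hxM)
  have hmM : m ≤ M := hm hxM
  have hMm1 : 1 ≤ M / m := (one_le_div hm0).mpr hmM
  -- global ratio bound for 1 ≤ s ≤ t
  have hratio : ∀ s t : ℝ, 1 ≤ s → s ≤ t → ρ t ≤ M / m * (ρ s * (t / s) ^ η) := by
    intro s t hs1 hst
    have hs0 : 0 < s := lt_of_lt_of_le one_pos hs1
    have ht0 : 0 < t := lt_of_lt_of_le hs0 hst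
    have hts1 : 1 ≤ t / s := (one_le_div hs0).mpr hst
    have hpow1 : 1 ≤ (t / s) ^ η := Real.one_le_rpow hts1 hη.le
    have hρs : 0 < ρ s := hpos s hs0
    rcases le_or_gt a s with has | hsa
    · have h := key s t has hst
      nlinarith [hpos t ht0]
    · rcases le_or_gt t a with hta | hat
      · -- both in [1, a]
        have hts : t ∈ Set.Icc (1:ℝ) a := ⟨le_trans hs1 hst, hta⟩
        have hss : s ∈ Set.Icc (1:ℝ) a := ⟨hs1, hsa.le⟩
        have h1 : ρ t ≤ M := hM hts
        have h2 : m ≤ ρ s := hm hss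
        calc ρ t ≤ M := h1
          _ = M / m * m := by field_simp
          _ ≤ M / m * (ρ s * (t / s) ^ η) := by
              apply mul_le_mul_of_nonneg_left _ (by positivity)
              nlinarith
      · -- s < a < t
        have hss : s ∈ Set.Icc (1:ℝ) a := ⟨hs1, hsa.le⟩
        have h2 : m ≤ ρ s := hm hss
        have hk := key a t le_rfl hat.le
        have hρa : ρ a ≤ M := hM ⟨ha1, le_rfl⟩
        have hta_le : (t / a) ^ η ≤ (t / s) ^ η := by
          apply Real.rpow_le_rpow (by positivity) _ hη.le
          exact div_le_div_of_nonneg_left ht0.le hs0 hsa.le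
        have hpow_a : 0 < (t / a) ^ η := Real.rpow_pos_of_pos (by positivity) _
        calc ρ t ≤ ρ a * (t / a) ^ η := hk
          _ ≤ M * (t / s) ^ η := mul_le_mul hρa hta_le hpow_a.le hM0.le
          _ ≤ M / m * (ρ s * (t / s) ^ η) := by
              rw [div_mul_eq_mul_div, mul_comm (ρ s), ← mul_assoc, le_div_iff₀ hm0]
              exact mul_le_mul_of_nonneg_left h2 (by positivity)
  -- the exponent σ
  set σ : ℝ := μ + η with hσ_def
  have hσ : σ < -1 := by rw [hσ_def, hη_def]; linarith
  set K : ℝ := 1 + 1 / (-σ - 1) with hK_def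
  have hK0 : 0 < K := by
    rw [hK_def]
    have : (0:ℝ) < -σ - 1 := by linarith
    positivity
  refine ⟨M / m * K, by positivity, ?_⟩
  intro l k hk hk0
  set m₀ : ℝ := (k 0 : ℝ) with hm₀_def
  have hm₀1 : (1:ℝ) ≤ m₀ := by rw [hm₀_def]; exact_mod_cast hk0
  have hm₀0 : 0 < m₀ := lt_of_lt_of_le one_pos hm₀1
  have hρk₀ : 0 < ρ m₀ := hpos m₀ hm₀0
  -- termwise bound
  have hterm : ∀ j : Fin (l + 1),
      (k j : ℝ) ^ μ * ρ (k j) ≤ M / m * ρ m₀ * m₀ ^ (-η) * (m₀ + (j:ℕ)) ^ σ := by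
    intro j
    have hkj_ge : k 0 + (j : ℕ) ≤ k j := fin_strictMono_le hk j
    have hkj_real : m₀ + (j:ℕ) ≤ (k j : ℝ) := by
      rw [hm₀_def]; exact_mod_cast hkj_ge
    have hkj1 : (1:ℝ) ≤ (k j : ℝ) := le_trans hm₀1 (le_trans (le_add_of_nonneg_right (by positivity)) hkj_real)
    have hkj0 : (0:ℝ) < (k j : ℝ) := lt_of_lt_of_le one_pos hkj1
    have hr := hratio m₀ (k j) hm₀1 (le_trans (le_add_of_nonneg_right (by positivity)) hkj_real)
    have hμpow : (0:ℝ) < (k j : ℝ) ^ μ := Real.rpow_pos_of_pos hkj0 _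
    have hstep1 : (k j : ℝ) ^ μ * ρ (k j)
        ≤ (k j : ℝ) ^ μ * (M / m * (ρ m₀ * ((k j : ℝ) / m₀) ^ η)) :=
      mul_le_mul_of_nonneg_left hr hμpow.le
    have hid : (k j : ℝ) ^ μ * (M / m * (ρ m₀ * ((k j : ℝ) / m₀) ^ η))
        = M / m * ρ m₀ * m₀ ^ (-η) * (k j : ℝ) ^ σ := by
      rw [Real.div_rpow hkj0.le hm₀0.le, hσ_def, Real.rpow_add hkj0, Real.rpow_neg hm₀0.le]
      field_simp
    have hmono : (k j : ℝ) ^ σ ≤ (m₀ + (j:ℕ)) ^ σ :=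
      Real.rpow_le_rpow_of_nonpos (by positivity) hkj_real (by linarith)
    calc (k j : ℝ) ^ μ * ρ (k j)
        ≤ M / m * ρ m₀ * m₀ ^ (-η) * (k j : ℝ) ^ σ := by rw [← hid]; exact hstep1
      _ ≤ M / m * ρ m₀ * m₀ ^ (-η) * (m₀ + (j:ℕ)) ^ σ := by
          apply mul_le_mul_of_nonneg_left hmono
          positivity
  have hsum1 : ∑ j : Fin (l + 1), (k j : ℝ) ^ μ * ρ (k j)
      ≤ M / m * ρ m₀ * m₀ ^ (-η) * ∑ j : Fin (l + 1), (m₀ + (j:ℕ)) ^ σ := by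
    rw [Finset.mul_sum]
    exact Finset.sum_le_sum fun j _ => hterm j
  have hsum2 : ∑ j : Fin (l + 1), (m₀ + (j:ℕ)) ^ σ ≤ K * m₀ ^ (σ + 1) := by
    have h1 : ∑ j : Fin (l + 1), (m₀ + (j:ℕ)) ^ σ
        = ∑ j ∈ Finset.range (l + 1), (m₀ + j) ^ σ :=
      Fin.sum_univ_eq_sum_range (fun n => (m₀ + (n:ℝ)) ^ σ) (l + 1)
    rw [h1]
    have h2 := aux_sum hσ hm₀1 l
    have h3 : (0:ℝ) < (m₀ + l) ^ (σ + 1) := Real.rpow_pos_of_pos (by positivity) _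
    have h4 : m₀ ^ σ ≤ m₀ ^ (σ + 1) :=
      Real.rpow_le_rpow_of_exponent_le hm₀1 (by linarith)
    have hc : (0:ℝ) < -σ - 1 := by linarith
    have h5 : (m₀ ^ (σ + 1) - (m₀ + l) ^ (σ + 1)) / (-σ - 1) ≤ m₀ ^ (σ + 1) / (-σ - 1) := by
      exact (div_le_div_iff_of_pos_right hc).mpr (by linarith)
    calc ∑ j ∈ Finset.range (l + 1), (m₀ + j) ^ σ
        ≤ m₀ ^ σ + (m₀ ^ (σ + 1) - (m₀ + l) ^ (σ + 1)) / (-σ - 1) := h2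
      _ ≤ m₀ ^ (σ + 1) + m₀ ^ (σ + 1) / (-σ - 1) := by linarith
      _ = K * m₀ ^ (σ + 1) := by rw [hK_def]; ring
  have hfin : M / m * ρ m₀ * m₀ ^ (-η) * (K * m₀ ^ (σ + 1))
      = M / m * K * (m₀ ^ (1 + μ) * ρ m₀) := by
    have : m₀ ^ (-η) * m₀ ^ (σ + 1) = m₀ ^ (1 + μ) := by
      rw [← Real.rpow_add hm₀0]
      congr 1
      rw [hσ_def]; ring
    calc M / m * ρ m₀ * m₀ ^ (-η) * (K * m₀ ^ (σ + 1))
        = M / m * K * ((m₀ ^ (-η) * m₀ ^ (σ + 1)) * ρ m₀) := by ring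
      _ = M / m * K * (m₀ ^ (1 + μ) * ρ m₀) := by rw [this]
  calc ∑ j : Fin (l + 1), (k j : ℝ) ^ μ * ρ (k j)
      ≤ M / m * ρ m₀ * m₀ ^ (-η) * ∑ j : Fin (l + 1), (m₀ + (j:ℕ)) ^ σ := hsum1
    _ ≤ M / m * ρ m₀ * m₀ ^ (-η) * (K * m₀ ^ (σ + 1)) := by
        apply mul_le_mul_of_nonneg_left hsum2
        positivity
    _ = M / m * K * (m₀ ^ (1 + μ) * ρ m₀) := hfin
end

section
/- Let 1 < p < ∞ with p' = p/(p−1), let (V, ≤) be a finite rooted tree with weight u : V → (0, ∞), let ξ* ∈ V have immediate successors ξ₁, …, ξ_m (m ≥ 1), let D_j ∈ J'_{ξ_j} for 1 ≤ j ≤ m, and set D = {ξ*} ∪ D₁ ∪ ⋯ ∪ D_m. Then β_D^{−p'} = u(ξ*)^{p'} + (∑_{j=1}^{m} β_{D_j}^{p})^{−p'/p}. -/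
open scoped Classical

noncomputable section

/-- A finite partial order is a rooted tree if it has a least element (the root) and
for every `ξ` the set of predecessors `{η | η ≤ ξ}` is linearly ordered. -/
def IsRootedTree (V : Type) [Fintype V] [PartialOrder V] : Prop :=
  (∃ ξ₀ : V, ∀ ξ : V, ξ₀ ≤ ξ) ∧
  ∀ ξ η₁ η₂ : V, η₁ ≤ ξ → η₂ ≤ ξ → η₁ ≤ η₂ ∨ η₂ ≤ η₁

/-- The depth of a vertex: the number of its strict predecessors. -/
def treeDepth {V : Type} [PartialOrder V] (ξ : V) : ℕ :=
  Nat.card {η : V // η < ξ}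

/-- The least constant `C ≥ 0` in the discrete two-weight Hardy-type inequality
`(∑_{ξ ≥ ξs} w(ξ)^q (∑_{ξs ≤ ξ' ≤ ξ} u(ξ') f(ξ'))^q)^{1/q} ≤ C (∑_{ξ ≥ ξs} f(ξ)^p)^{1/p}`
over all nonnegative `f`. -/
def SconstPQ {V : Type} [Fintype V] [PartialOrder V]
    (p q : ℝ) (u w : V → ℝ) (ξs : V) : ℝ :=
  sInf {C : ℝ | 0 ≤ C ∧ ∀ f : V → ℝ, (∀ ξ : V, 0 ≤ f ξ) →
    (∑ ξ ∈ Finset.univ.filter (fun ξ : V => ξs ≤ ξ),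
        w ξ ^ q * (∑ ξ' ∈ Finset.univ.filter (fun ξ' : V => ξs ≤ ξ' ∧ ξ' ≤ ξ),
          u ξ' * f ξ') ^ q) ^ (1 / q)
      ≤ C * (∑ ξ ∈ Finset.univ.filter (fun ξ : V => ξs ≤ ξ), f ξ ^ p) ^ (1 / p)}

/-- The family `J'_{ξs}`: subsets `D` of `{η | η ≥ ξs}` containing `ξs`, closed under
taking intermediate vertices, and such that every non-maximal element of `D` has all
of its immediate successors (in `V`) in `D`. -/
def Jfam {V : Type} [Fintype V] [PartialOrder V] (ξs : V) (D : Finset V) : Prop :=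
  ξs ∈ D ∧ (∀ ξ ∈ D, ξs ≤ ξ) ∧
  (∀ η ζ : V, ζ ∈ D → ξs ≤ η → η ≤ ζ → η ∈ D) ∧
  (∀ ξ ∈ D, (∃ ζ ∈ D, ξ < ζ) → ∀ η : V, ξ ⋖ η → η ∈ D)

/-- The quantity `β_D`: the infimum of `(∑_ξ |f(ξ)|^p)^{1/p}` over functions `f` with
`∑_{ξs ≤ ξ' ≤ ξ} f(ξ') u(ξ') = 1` for every maximal element `ξ` of `D`. -/
def betaD {V : Type} [Fintype V] [PartialOrder V]
    (p : ℝ) (u : V → ℝ) (ξs : V) (D : Finset V) : ℝ :=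
  sInf {b : ℝ | ∃ f : V → ℝ,
    (∀ ξ ∈ D, (∀ ζ ∈ D, ¬ ξ < ζ) →
      ∑ ξ' ∈ Finset.univ.filter (fun ξ' : V => ξs ≤ ξ' ∧ ξ' ≤ ξ), f ξ' * u ξ' = 1) ∧
    b = (∑ ξ : V, |f ξ| ^ p) ^ (1 / p)}

/-! ### Auxiliary scalar lemmas -/

section Aux

/-- Two-point Hölder: scalar lower bound. -/
lemma scalar_holder {p q : ℝ} (hpq : Real.HolderConjugate p q) {a b : ℝ}
    (ha : 0 < a) (hb : 0 < b) (t : ℝ) :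
    (a ^ (-q) + b ^ (-q)) ^ (1 - p) ≤ |t| ^ p * a ^ p + |1 - t| ^ p * b ^ p := by
  set X : ℝ := |t| ^ p * a ^ p + |1 - t| ^ p * b ^ p with hX
  have hXnn : 0 ≤ X := by positivity
  set S : ℝ := a ^ (-q) + b ^ (-q) with hS
  have hSpos : 0 < S := by positivity
  have hq0 : q ≠ 0 := hpq.symm.ne_zero
  have hp0 : p ≠ 0 := hpq.ne_zero
  have holder := Real.inner_le_Lp_mul_Lq_of_nonneg (s := (Finset.univ : Finset (Fin 2)))
    (f := ![|t| * a, |1 - t| * b]) (g := ![a⁻¹, b⁻¹]) hpq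
    (by intro i _; fin_cases i <;> simp <;> positivity)
    (by intro i _; fin_cases i <;> simp <;> positivity)
  rw [Fin.sum_univ_two, Fin.sum_univ_two, Fin.sum_univ_two] at holder
  simp only [Matrix.cons_val_zero, Matrix.cons_val_one, Matrix.head_cons] at holder
  have e1 : |t| * a * a⁻¹ + |1 - t| * b * b⁻¹ = |t| + |1 - t| := by
    field_simp
  have e2 : (|t| * a) ^ p + (|1 - t| * b) ^ p = X := by
    rw [Real.mul_rpow (abs_nonneg _) ha.le, Real.mul_rpow (abs_nonneg _) hb.le, hX]
  have e3 : (a⁻¹) ^ q + (b⁻¹) ^ q = S := by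
    rw [Real.inv_rpow ha.le, Real.inv_rpow hb.le, hS, Real.rpow_neg ha.le, Real.rpow_neg hb.le]
  rw [e1, e2, e3] at holder
  have h1 : (1 : ℝ) ≤ |t| + |1 - t| := by
    have h : (1 : ℝ) = t + (1 - t) := by ring
    calc (1:ℝ) = |t + (1 - t)| := by rw [← h]; simp
    _ ≤ |t| + |1 - t| := abs_add_le _ _
  have h2 : (1 : ℝ) ≤ X ^ (1 / p) * S ^ (1 / q) := le_trans h1 holder
  have hSq : 0 < S ^ (1 / q) := Real.rpow_pos_of_pos hSpos _
  have h3 : (S ^ (1 / q))⁻¹ ≤ X ^ (1 / p) := by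
    rw [inv_le_iff_one_le_mul₀ hSq]
    exact h2
  have h4 : ((S ^ (1 / q))⁻¹) ^ p ≤ (X ^ (1 / p)) ^ p :=
    Real.rpow_le_rpow (by positivity) h3 hpq.nonneg
  have h5 : (X ^ (1 / p)) ^ p = X := by
    rw [one_div, Real.rpow_inv_rpow hXnn hp0]
  have h6 : ((S ^ (1 / q))⁻¹) ^ p = S ^ (1 - p) := by
    rw [← Real.rpow_neg_one, ← Real.rpow_mul hSpos.le, ← Real.rpow_mul hSpos.le]
    congr 1
    field_simp
    linarith [(div_eq_iff hq0).1 hpq.div_conj_eq_sub_one]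
  rw [h5, h6] at h4
  exact h4

/-- The optimal `t` achieving the scalar bound. -/
lemma scalar_opt {p q : ℝ} (hpq : Real.HolderConjugate p q) {a b : ℝ}
    (ha : 0 < a) (hb : 0 < b) :
    ∃ t : ℝ, 0 ≤ t ∧ t ≤ 1 ∧
      t ^ p * a ^ p + (1 - t) ^ p * b ^ p = (a ^ (-q) + b ^ (-q)) ^ (1 - p) := by
  set S : ℝ := a ^ (-q) + b ^ (-q) with hS
  have haq : 0 < a ^ (-q) := Real.rpow_pos_of_pos ha _
  have hbq : 0 < b ^ (-q) := Real.rpow_pos_of_pos hb _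
  have hSpos : 0 < S := by positivity
  refine ⟨a ^ (-q) / S, by positivity, ?_, ?_⟩
  · rw [div_le_one hSpos]; simp [hS]; positivity
  · have h1t : 1 - a ^ (-q) / S = b ^ (-q) / S := by
      field_simp [hS]
      rw [hS]; ring
    rw [h1t]
    have key : ∀ x : ℝ, 0 < x → (x ^ (-q) / S) ^ p * x ^ p = x ^ (-q) / S ^ p := by
      intro x hx
      have hxq : (0:ℝ) ≤ x ^ (-q) := (Real.rpow_pos_of_pos hx _).le
      rw [Real.div_rpow hxq hSpos.le, ← Real.rpow_mul hx.le, div_mul_eq_mul_div,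
        ← Real.rpow_add hx]
      congr 2
      nlinarith [hpq.sub_one_mul_conj]
    rw [key a ha, key b hb, ← add_div, ← hS]
    rw [← Real.rpow_one S, ← Real.rpow_mul hSpos.le, ← Real.rpow_sub hSpos]
    norm_num

end Aux

/-! ### The variational set underlying `betaD` -/

section BetaSet

variable {V : Type} [Fintype V] [PartialOrder V]

def betaSet (p : ℝ) (u : V → ℝ) (ξs : V) (D : Finset V) : Set ℝ :=
  {b : ℝ | ∃ f : V → ℝ,
    (∀ ξ ∈ D, (∀ ζ ∈ D, ¬ ξ < ζ) →
      ∑ ξ' ∈ Finset.univ.filter (fun ξ' : V => ξs ≤ ξ' ∧ ξ' ≤ ξ), f ξ' * u ξ' = 1) ∧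
    b = (∑ ξ : V, |f ξ| ^ p) ^ (1 / p)}

lemma betaD_eq_sInf (p : ℝ) (u : V → ℝ) (ξs : V) (D : Finset V) :
    betaD p u ξs D = sInf (betaSet p u ξs D) := rfl

lemma betaSet_nonneg {p : ℝ} {u : V → ℝ} {ξs : V} {D : Finset V} :
    ∀ b ∈ betaSet p u ξs D, 0 ≤ b := by
  rintro b ⟨f, -, rfl⟩
  positivity

lemma betaSet_nonempty {p : ℝ} {u : V → ℝ} (hu : ∀ ξ, 0 < u ξ) {ξs : V} {D : Finset V}
    (hD : ∀ ξ ∈ D, ξs ≤ ξ) : (betaSet p u ξs D).Nonempty := by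
  refine ⟨_, fun ξ' => if ξ' = ξs then (u ξs)⁻¹ else 0, fun ξ hξ _ => ?_, rfl⟩
  rw [Finset.sum_eq_single_of_mem ξs]
  · simp [inv_mul_cancel₀ (hu ξs).ne']
  · simp [hD ξ hξ]
  · intro b _ hb
    simp [hb]

lemma betaSet_lb {p : ℝ} (hp : 1 < p) {u : V → ℝ} (hu : ∀ ξ, 0 < u ξ) {ξs : V} {D : Finset V}
    (hDne : D.Nonempty) :
    ∀ b ∈ betaSet p u ξs D,
      ((∑ ξ : V, u ξ ^ (p / (p - 1))) ^ (1 / (p / (p - 1))))⁻¹ ≤ b := by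
  rintro b ⟨f, hf, rfl⟩
  have hpq : Real.HolderConjugate p (p / (p - 1)) := Real.HolderConjugate.conjExponent hp
  obtain ⟨ξ0, hξ0max⟩ := Finset.exists_maximal hDne
  have hξ0 : ξ0 ∈ D := hξ0max.1
  have hmax : ∀ ζ ∈ D, ¬ ξ0 < ζ := fun ζ hζ hlt => hlt.not_ge (hξ0max.2 hζ hlt.le)
  have hcon := hf ξ0 hξ0 hmax
  set T := Finset.univ.filter (fun ξ' : V => ξs ≤ ξ' ∧ ξ' ≤ ξ0) with hT
  have h1 : (1 : ℝ) ≤ ∑ ξ' ∈ T, |f ξ'| * u ξ' := by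
    calc (1 : ℝ) = ∑ ξ' ∈ T, f ξ' * u ξ' := hcon.symm
    _ ≤ |∑ ξ' ∈ T, f ξ' * u ξ'| := le_abs_self _
    _ ≤ ∑ ξ' ∈ T, |f ξ' * u ξ'| := Finset.abs_sum_le_sum_abs _ _
    _ = ∑ ξ' ∈ T, |f ξ'| * u ξ' := by
        refine Finset.sum_congr rfl fun x _ => ?_
        rw [abs_mul, abs_of_pos (hu x)]
  have h2 : ∑ ξ' ∈ T, |f ξ'| * u ξ' ≤ ∑ ξ' : V, |f ξ'| * u ξ' :=
    Finset.sum_le_sum_of_subset_of_nonneg (Finset.subset_univ _)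
      fun x _ _ => mul_nonneg (abs_nonneg _) (hu x).le
  have h3 := Real.inner_le_Lp_mul_Lq_of_nonneg (s := (Finset.univ : Finset V))
    (f := fun ξ => |f ξ|) (g := u) hpq (fun i _ => abs_nonneg _) (fun i _ => (hu i).le)
  have h4 : (1 : ℝ) ≤ (∑ ξ : V, |f ξ| ^ p) ^ (1 / p) *
      (∑ ξ : V, u ξ ^ (p / (p - 1))) ^ (1 / (p / (p - 1))) := le_trans h1 (le_trans h2 h3)
  have hK : 0 < (∑ ξ : V, u ξ ^ (p / (p - 1))) ^ (1 / (p / (p - 1))) := by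
    apply Real.rpow_pos_of_pos
    obtain ⟨ξ0, -⟩ := hDne
    exact Finset.sum_pos (fun i _ => Real.rpow_pos_of_pos (hu i) _) ⟨ξ0, Finset.mem_univ _⟩
  rw [inv_le_iff_one_le_mul₀' hK]
  linarith [h4]

lemma betaD_pos {p : ℝ} (hp : 1 < p) {u : V → ℝ} (hu : ∀ ξ, 0 < u ξ) {ξs : V} {D : Finset V}
    (hDne : D.Nonempty) (hD : ∀ ξ ∈ D, ξs ≤ ξ) : 0 < betaD p u ξs D := by
  rw [betaD_eq_sInf]
  have hK : 0 < ((∑ ξ : V, u ξ ^ (p / (p - 1))) ^ (1 / (p / (p - 1))))⁻¹ := by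
    apply inv_pos.2
    apply Real.rpow_pos_of_pos
    obtain ⟨ξ0, -⟩ := hDne
    exact Finset.sum_pos (fun i _ => Real.rpow_pos_of_pos (hu i) _) ⟨ξ0, Finset.mem_univ _⟩
  exact lt_of_lt_of_le hK (le_csInf (betaSet_nonempty hu hD) (betaSet_lb hp hu hDne))

end BetaSet

/-! ### Tree combinatorics -/

section Tree

variable {V : Type} [Fintype V] [PartialOrder V] (htree : IsRootedTree V)
  {ξs : V} {m : ℕ} {s : Fin m → V}

set_option linter.unusedSectionVars false

include htree

lemma branch_unique (hinj : Function.Injective s) (hcov : ∀ j, ξs ⋖ s j)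
    {j k : Fin m} {ξ : V} (hj : s j ≤ ξ) (hk : s k ≤ ξ) : j = k := by
  rcases htree.2 ξ (s j) (s k) hj hk with h | h
  · rcases eq_or_lt_of_le h with h | h
    · exact hinj h
    · exact absurd h ((hcov k).2 (hcov j).1)
  · rcases eq_or_lt_of_le h with h | h
    · exact hinj h.symm
    · exact absurd h ((hcov j).2 (hcov k).1)

lemma succ_le_of_lt (hcov : ∀ j, ξs ⋖ s j) {j : Fin m} {ξ ξ' : V}
    (hξ : s j ≤ ξ) (h1 : ξs < ξ') (h2 : ξ' ≤ ξ) : s j ≤ ξ' := by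
  rcases htree.2 ξ (s j) ξ' hξ h2 with h | h
  · exact h
  · rcases eq_or_lt_of_le h with h | h
    · exact h.ge
    · exact absurd h ((hcov j).2 h1)

lemma root_not_mem_interval (hcov : ∀ j, ξs ⋖ s j) (j : Fin m) (ξ : V) :
    ξs ∉ Finset.univ.filter (fun ξ' : V => s j ≤ ξ' ∧ ξ' ≤ ξ) := by
  simp only [Finset.mem_filter, Finset.mem_univ, true_and, not_and]
  intro h
  exact absurd h (hcov j).1.not_ge

lemma filter_split (hcov : ∀ j, ξs ⋖ s j) {j : Fin m} {ξ : V} (hξ : s j ≤ ξ) :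
    Finset.univ.filter (fun ξ' : V => ξs ≤ ξ' ∧ ξ' ≤ ξ)
      = insert ξs (Finset.univ.filter fun ξ' : V => s j ≤ ξ' ∧ ξ' ≤ ξ) := by
  ext ξ'
  simp only [Finset.mem_filter, Finset.mem_univ, true_and, Finset.mem_insert]
  constructor
  · rintro ⟨h1, h2⟩
    rcases eq_or_lt_of_le h1 with h | h
    · exact Or.inl h.symm
    · exact Or.inr ⟨succ_le_of_lt htree hcov hξ h h2, h2⟩
  · rintro (rfl | ⟨h1, h2⟩)
    · exact ⟨le_refl _, le_trans (hcov j).1.le hξ⟩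
    · exact ⟨le_trans (hcov j).1.le h1, h2⟩

lemma branch_disjoint (hinj : Function.Injective s) (hcov : ∀ j, ξs ⋖ s j)
    {j k : Fin m} (hjk : j ≠ k) :
    Disjoint (Finset.univ.filter fun ξ : V => s j ≤ ξ)
      (Finset.univ.filter fun ξ : V => s k ≤ ξ) := by
  rw [Finset.disjoint_left]
  intro ξ hj hk
  simp only [Finset.mem_filter, Finset.mem_univ, true_and] at hj hk
  exact hjk (branch_unique htree hinj hcov hj hk)

lemma root_not_mem_branch (hcov : ∀ j, ξs ⋖ s j) (j : Fin m) :
    ξs ∉ Finset.univ.filter (fun ξ : V => s j ≤ ξ) := by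
  simp only [Finset.mem_filter, Finset.mem_univ, true_and]
  exact (hcov j).1.not_ge

lemma max_transfer_up (hinj : Function.Injective s) (hcov : ∀ j, ξs ⋖ s j)
    {Ds : Fin m → Finset V} (hDs : ∀ j, ∀ ξ ∈ Ds j, s j ≤ ξ)
    {j : Fin m} {ξ : V} (hξ : ξ ∈ Ds j) (hmax : ∀ ζ ∈ Ds j, ¬ ξ < ζ) :
    ∀ ζ ∈ insert ξs (Finset.univ.biUnion Ds), ¬ ξ < ζ := by
  intro ζ hζ hlt
  rcases Finset.mem_insert.1 hζ with rfl | hζ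
  · exact absurd (lt_trans (lt_of_lt_of_le (hcov j).1 (hDs j ξ hξ)) hlt) (lt_irrefl _)
  · obtain ⟨k, -, hk⟩ := Finset.mem_biUnion.1 hζ
    have hkζ : s k ≤ ζ := hDs k ζ hk
    have hjζ : s j ≤ ζ := le_trans (hDs j ξ hξ) hlt.le
    have hh : j = k := branch_unique htree hinj hcov hjζ hkζ
    exact hmax ζ (hh ▸ hk) hlt

lemma max_transfer_down {Ds : Fin m → Finset V} (hcov : ∀ j, ξs ⋖ s j) (hm : 1 ≤ m)
    (hDs : ∀ j : Fin m, s j ∈ Ds j) {ξ : V}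
    (hξ : ξ ∈ insert ξs (Finset.univ.biUnion Ds))
    (hmax : ∀ ζ ∈ insert ξs (Finset.univ.biUnion Ds), ¬ ξ < ζ) :
    ∃ j : Fin m, ξ ∈ Ds j ∧ ∀ ζ ∈ Ds j, ¬ ξ < ζ := by
  rcases Finset.mem_insert.1 hξ with rfl | hξ
  · exfalso
    refine hmax (s ⟨0, hm⟩) ?_ (hcov ⟨0, hm⟩).1
    exact Finset.mem_insert_of_mem (Finset.mem_biUnion.2 ⟨⟨0, hm⟩, Finset.mem_univ _, hDs _⟩)
  · obtain ⟨j, -, hj⟩ := Finset.mem_biUnion.1 hξ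
    exact ⟨j, hj, fun ζ hζ => hmax ζ (Finset.mem_insert_of_mem
      (Finset.mem_biUnion.2 ⟨j, Finset.mem_univ _, hζ⟩))⟩

end Tree

/-- the recursion formula for `β_D` when `D` is assembled from the root
`ξs` and subtrees `D_j ∈ J'_{ξ_j}` attached at the immediate successors `ξ_j` of `ξs`:
`β_D^{−p'} = u(ξs)^{p'} + (∑_j β_{D_j}^p)^{−p'/p}` with `p' = p/(p−1)`. -/
theorem statement7 (p : ℝ) (hp : 1 < p)
    (V : Type) [Fintype V] [PartialOrder V] (htree : IsRootedTree V)
    (u : V → ℝ) (hu : ∀ ξ : V, 0 < u ξ)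
    (ξs : V) (m : ℕ) (hm : 1 ≤ m)
    (s : Fin m → V) (hinj : Function.Injective s)
    (hcov : ∀ j : Fin m, ξs ⋖ s j)
    (hall : ∀ η : V, ξs ⋖ η → ∃ j : Fin m, s j = η)
    (Ds : Fin m → Finset V) (hDs : ∀ j : Fin m, Jfam (s j) (Ds j)) :
    betaD p u ξs (insert ξs (Finset.univ.biUnion Ds)) ^ (-(p / (p - 1)))
      = u ξs ^ (p / (p - 1)) +
        (∑ j : Fin m, betaD p u (s j) (Ds j) ^ p) ^ (-((p / (p - 1)) / p)) := by
  classical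
  have hpq : Real.HolderConjugate p (p / (p - 1)) := Real.HolderConjugate.conjExponent hp
  set q := p / (p - 1) with hqdef
  have hp0 : p ≠ 0 := hpq.ne_zero
  have hppos : 0 < p := hpq.pos
  have hq0 : q ≠ 0 := hpq.symm.ne_zero
  have hqpos : 0 < q := hpq.symm.pos
  have hDsub : ∀ j, ∀ ξ ∈ Ds j, s j ≤ ξ := fun j => (hDs j).2.1
  have hDsmem : ∀ j : Fin m, s j ∈ Ds j := fun j => (hDs j).1
  have hβpos : ∀ j, 0 < betaD p u (s j) (Ds j) := fun j =>
    betaD_pos hp hu ⟨s j, hDsmem j⟩ (hDsub j)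
  have hβnn : ∀ j, 0 ≤ betaD p u (s j) (Ds j) := fun j => (hβpos j).le
  set T : ℝ := ∑ j : Fin m, betaD p u (s j) (Ds j) ^ p with hT
  have hj0 : (Finset.univ : Finset (Fin m)).Nonempty := ⟨⟨0, hm⟩, Finset.mem_univ _⟩
  have hTpos : 0 < T :=
    Finset.sum_pos (fun j _ => Real.rpow_pos_of_pos (hβpos j) _) hj0
  set a : ℝ := (u ξs)⁻¹ with hadef
  have hapos : 0 < a := inv_pos.2 (hu ξs)
  set B : ℝ := T ^ (1 / p) with hBdef
  have hBpos : 0 < B := Real.rpow_pos_of_pos hTpos _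
  have hBp : B ^ p = T := by rw [hBdef, one_div, Real.rpow_inv_rpow hTpos.le hp0]
  set S : ℝ := a ^ (-q) + B ^ (-q) with hSdef
  have hSpos : 0 < S := by positivity
  have haq : a ^ (-q) = u ξs ^ q := by
    rw [hadef, Real.inv_rpow (hu ξs).le, Real.rpow_neg (hu ξs).le, inv_inv]
  have hBq : B ^ (-q) = T ^ (-(q / p)) := by
    rw [hBdef, ← Real.rpow_mul hTpos.le]; congr 1; ring
  set D : Finset V := insert ξs (Finset.univ.biUnion Ds) with hDdef
  have hDall : ∀ ξ ∈ D, ξs ≤ ξ := by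
    intro ξ hξ
    rcases Finset.mem_insert.1 hξ with rfl | hξ
    · exact le_refl _
    · obtain ⟨j, -, hj⟩ := Finset.mem_biUnion.1 hξ
      exact le_trans (hcov j).1.le (hDsub j ξ hj)
  set A : Fin m → Finset V := fun j => Finset.univ.filter (fun ξ : V => s j ≤ ξ) with hA
  have hAmem : ∀ (j : Fin m) (ξ : V), ξ ∈ A j ↔ s j ≤ ξ := by
    intro j ξ; simp [hA]
  have hξsE : ξs ∉ Finset.univ.biUnion A := by
    intro h
    obtain ⟨j, -, hj⟩ := Finset.mem_biUnion.1 h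
    exact root_not_mem_branch htree hcov j hj
  have hdisj : (↑(Finset.univ : Finset (Fin m)) : Set (Fin m)).PairwiseDisjoint A := by
    intro j _ k _ hjk
    exact branch_disjoint htree hinj hcov hjk
  have hsplitsum : ∀ g : V → ℝ,
      ∑ ξ ∈ insert ξs (Finset.univ.biUnion A), g ξ = g ξs + ∑ j : Fin m, ∑ ξ ∈ A j, g ξ := by
    intro g
    rw [Finset.sum_insert hξsE, Finset.sum_biUnion hdisj]
  -- exponent juggling
  have hexp : (S ^ (1 - p)) ^ (1 / p) = S ^ (-(1 / q)) := by
    rw [← Real.rpow_mul hSpos.le]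
    congr 1
    field_simp
    linarith [hpq.sub_one_mul_conj]
  -- ===== main claim =====
  have hmain : betaD p u ξs D = S ^ (-(1 / q)) := by
    refine le_antisymm ?_ ?_
    · -- upper bound: betaD ≤ S ^ (-(1/q))
      obtain ⟨tst, ht0, ht1, htopt⟩ := scalar_opt hpq hapos hBpos
      have hbdd : BddBelow (betaSet p u ξs D) := ⟨0, fun x hx => betaSet_nonneg x hx⟩
      set Φ : ℝ → ℝ := fun ε =>
        (tst ^ p * a ^ p +
          (1 - tst) ^ p * ∑ j : Fin m, (betaD p u (s j) (Ds j) + ε) ^ p) ^ (1 / p) with hΦdef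
      have hstep : ∀ ε : ℝ, 0 < ε → betaD p u ξs D ≤ Φ ε := by
        intro ε hε
        have hpick : ∀ j : Fin m, ∃ f : V → ℝ,
            (∀ ξ ∈ Ds j, (∀ ζ ∈ Ds j, ¬ ξ < ζ) →
              ∑ ξ' ∈ Finset.univ.filter (fun ξ' : V => s j ≤ ξ' ∧ ξ' ≤ ξ),
                f ξ' * u ξ' = 1) ∧
            (∑ ξ : V, |f ξ| ^ p) ^ (1 / p) < betaD p u (s j) (Ds j) + ε := by
          intro j
          have h1 : sInf (betaSet p u (s j) (Ds j)) < betaD p u (s j) (Ds j) + ε := by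
            rw [← betaD_eq_sInf]; exact lt_add_of_pos_right _ hε
          obtain ⟨b, hb, hblt⟩ := exists_lt_of_csInf_lt (betaSet_nonempty hu (hDsub j)) h1
          obtain ⟨f, hfc, rfl⟩ := hb
          exact ⟨f, hfc, hblt⟩
        choose fj hfjcon hfjval using hpick
        set F : V → ℝ := fun ξ => if ξ = ξs then tst * a else
          if h : ∃ j : Fin m, s j ≤ ξ then (1 - tst) * fj h.choose ξ else 0 with hFdef
        have hFbranch : ∀ (j : Fin m) (ξ : V), s j ≤ ξ → F ξ = (1 - tst) * fj j ξ := by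
          intro j ξ hξ
          have hne : ξ ≠ ξs := by
            rintro rfl; exact (hcov j).1.not_ge hξ
          have hex : ∃ k : Fin m, s k ≤ ξ := ⟨j, hξ⟩
          have hch : hex.choose = j := branch_unique htree hinj hcov hex.choose_spec hξ
          simp only [hFdef]
          rw [if_neg hne, dif_pos hex, hch]
        have hFroot : F ξs = tst * a := by simp [hFdef]
        have hFmem : (∑ ξ : V, |F ξ| ^ p) ^ (1 / p) ∈ betaSet p u ξs D := by
          refine ⟨F, ?_, rfl⟩
          intro ξ hξ hmax
          obtain ⟨j, hξj, hmaxj⟩ := max_transfer_down htree hcov hm hDsmem hξ hmax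
          have hsjξ : s j ≤ ξ := hDsub j ξ hξj
          rw [filter_split htree hcov hsjξ,
            Finset.sum_insert (root_not_mem_interval htree hcov j ξ)]
          have hbr : ∑ ξ' ∈ Finset.univ.filter (fun ξ' : V => s j ≤ ξ' ∧ ξ' ≤ ξ),
              F ξ' * u ξ'
              = (1 - tst) * ∑ ξ' ∈ Finset.univ.filter (fun ξ' : V => s j ≤ ξ' ∧ ξ' ≤ ξ),
                  fj j ξ' * u ξ' := by
            rw [Finset.mul_sum]
            refine Finset.sum_congr rfl fun x hx => ?_
            rw [hFbranch j x (Finset.mem_filter.1 hx).2.1]; ring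
          rw [hFroot, hbr, hfjcon j ξ hξj hmaxj, hadef]
          field_simp
          rw [mul_div_assoc, div_self (hu ξs).ne']
          ring
        have hval : ∑ ξ : V, |F ξ| ^ p ≤ tst ^ p * a ^ p +
            (1 - tst) ^ p * ∑ j : Fin m, (betaD p u (s j) (Ds j) + ε) ^ p := by
          have hFzero : ∀ ξ ∈ Finset.univ,
              ξ ∉ insert ξs (Finset.univ.biUnion A) → |F ξ| ^ p = 0 := by
            intro ξ _ hξ
            simp only [Finset.mem_insert, Finset.mem_biUnion, Finset.mem_univ, true_and,
              not_or, not_exists] at hξ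
            have hnb : ¬ ∃ j : Fin m, s j ≤ ξ := by
              rintro ⟨j, hj⟩
              exact hξ.2 j ((hAmem j ξ).2 hj)
            have : F ξ = 0 := by
              simp only [hFdef]
              rw [if_neg hξ.1, dif_neg hnb]
            rw [this, abs_zero, Real.zero_rpow hp0]
          have e0 : ∑ ξ : V, |F ξ| ^ p = ∑ ξ ∈ insert ξs (Finset.univ.biUnion A), |F ξ| ^ p :=
            (Finset.sum_subset (Finset.subset_univ _) hFzero).symm
          rw [e0, hsplitsum]
          have eroot : |F ξs| ^ p = tst ^ p * a ^ p := by
            rw [hFroot, abs_of_nonneg (mul_nonneg ht0 hapos.le),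
              Real.mul_rpow ht0 hapos.le]
          have ebranch : ∀ j : Fin m, ∑ ξ ∈ A j, |F ξ| ^ p
              ≤ (1 - tst) ^ p * (betaD p u (s j) (Ds j) + ε) ^ p := by
            intro j
            have e1 : ∀ ξ ∈ A j, |F ξ| ^ p = (1 - tst) ^ p * |fj j ξ| ^ p := by
              intro ξ hξ
              rw [hFbranch j ξ ((hAmem j ξ).1 hξ), abs_mul,
                abs_of_nonneg (by linarith : (0:ℝ) ≤ 1 - tst),
                Real.mul_rpow (by linarith) (abs_nonneg _)]
            rw [Finset.sum_congr rfl e1, ← Finset.mul_sum]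
            have hsnn : 0 ≤ ∑ ξ : V, |fj j ξ| ^ p := by positivity
            have hsub : ∑ ξ ∈ A j, |fj j ξ| ^ p ≤ ∑ ξ : V, |fj j ξ| ^ p :=
              Finset.sum_le_sum_of_subset_of_nonneg (Finset.subset_univ _)
                fun ξ _ _ => by positivity
            have h5 : ∑ ξ : V, |fj j ξ| ^ p ≤ (betaD p u (s j) (Ds j) + ε) ^ p := by
              have h6 := Real.rpow_le_rpow (Real.rpow_nonneg hsnn _)
                (hfjval j).le hppos.le
              rwa [one_div, Real.rpow_inv_rpow hsnn hp0] at h6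
            have h7 : (0:ℝ) ≤ (1 - tst) ^ p := Real.rpow_nonneg (by linarith) _
            exact mul_le_mul_of_nonneg_left (le_trans hsub h5) h7
          rw [eroot, Finset.mul_sum]
          exact add_le_add (le_refl _) (Finset.sum_le_sum fun j _ => ebranch j)
        calc betaD p u ξs D ≤ (∑ ξ : V, |F ξ| ^ p) ^ (1 / p) := by
              rw [betaD_eq_sInf]; exact csInf_le hbdd hFmem
        _ ≤ Φ ε := by
              simp only [hΦdef]
              exact Real.rpow_le_rpow (by positivity) hval (by positivity)
      have hΦ0 : Φ 0 = S ^ (-(1 / q)) := by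
        simp only [hΦdef, add_zero]
        rw [← hT, ← hBp, htopt]
        exact hexp
      have hcont : ContinuousAt Φ 0 := by
        apply ContinuousAt.rpow_const
        · apply ContinuousAt.add continuousAt_const
          apply ContinuousAt.mul continuousAt_const
          exact tendsto_finset_sum _ fun j _ =>
            (ContinuousAt.rpow_const (continuousAt_const.add continuousAt_id)
              (Or.inr hppos.le))
        · right; positivity
      have htend : Filter.Tendsto Φ (nhdsWithin 0 (Set.Ioi (0:ℝ)))
          (nhds (S ^ (-(1 / q)))) := by
        rw [← hΦ0]
        exact (hcont.tendsto).mono_left nhdsWithin_le_nhds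
      refine ge_of_tendsto htend ?_
      filter_upwards [self_mem_nhdsWithin] with ε hε
      exact hstep ε hε
    · -- lower bound: S ^ (-(1/q)) ≤ betaD
      rw [betaD_eq_sInf]
      refine le_csInf (betaSet_nonempty hu hDall) ?_
      rintro b ⟨f, hf, rfl⟩
      have key : S ^ (1 - p) ≤ ∑ ξ : V, |f ξ| ^ p := by
        set t : ℝ := f ξs * u ξs with htdef
        have hroot : |t| ^ p * a ^ p = |f ξs| ^ p := by
          rw [htdef, hadef, abs_mul, abs_of_pos (hu ξs),
            Real.mul_rpow (abs_nonneg _) (hu ξs).le, Real.inv_rpow (hu ξs).le,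
            mul_assoc, mul_inv_cancel₀ (Real.rpow_pos_of_pos (hu ξs) p).ne', mul_one]
        have hbranch : ∀ j : Fin m,
            |1 - t| ^ p * betaD p u (s j) (Ds j) ^ p ≤ ∑ ξ ∈ A j, |f ξ| ^ p := by
          intro j
          by_cases ht1 : t = 1
          · rw [ht1, sub_self, abs_zero, Real.zero_rpow hp0, zero_mul]
            exact Finset.sum_nonneg fun ξ _ => by positivity
          · have h1t : (0:ℝ) < |1 - t| := abs_pos.2 (sub_ne_zero.2 (Ne.symm ht1))
            set g : V → ℝ := fun ξ => if s j ≤ ξ then f ξ / (1 - t) else 0 with hgdef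
            have hgmem : (∑ ξ : V, |g ξ| ^ p) ^ (1 / p) ∈ betaSet p u (s j) (Ds j) := by
              refine ⟨g, ?_, rfl⟩
              intro ξ hξ hmaxj
              have hsjξ : s j ≤ ξ := hDsub j ξ hξ
              have hξD : ξ ∈ D :=
                Finset.mem_insert_of_mem (Finset.mem_biUnion.2 ⟨j, Finset.mem_univ _, hξ⟩)
              have hmaxD := max_transfer_up htree hinj hcov hDsub hξ hmaxj
              have hcon := hf ξ hξD hmaxD
              rw [filter_split htree hcov hsjξ,
                Finset.sum_insert (root_not_mem_interval htree hcov j ξ)] at hcon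
              have hsum : ∑ ξ' ∈ Finset.univ.filter (fun ξ' : V => s j ≤ ξ' ∧ ξ' ≤ ξ),
                  f ξ' * u ξ' = 1 - t := by
                rw [htdef]; linarith [hcon]
              have hgsum : ∑ ξ' ∈ Finset.univ.filter (fun ξ' : V => s j ≤ ξ' ∧ ξ' ≤ ξ),
                  g ξ' * u ξ'
                  = (∑ ξ' ∈ Finset.univ.filter (fun ξ' : V => s j ≤ ξ' ∧ ξ' ≤ ξ),
                      f ξ' * u ξ') / (1 - t) := by
                rw [Finset.sum_div]
                refine Finset.sum_congr rfl fun x hx => ?_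
                have hx' : s j ≤ x := (Finset.mem_filter.1 hx).2.1
                simp only [hgdef]
                rw [if_pos hx']; ring
              rw [hgsum, hsum, div_self (sub_ne_zero.2 (Ne.symm ht1))]
            have hgnn : 0 ≤ ∑ ξ : V, |g ξ| ^ p := by positivity
            have hle : betaD p u (s j) (Ds j) ≤ (∑ ξ : V, |g ξ| ^ p) ^ (1 / p) := by
              rw [betaD_eq_sInf]
              exact csInf_le ⟨0, fun x hx => betaSet_nonneg x hx⟩ hgmem
            have h2 : betaD p u (s j) (Ds j) ^ p ≤ ∑ ξ : V, |g ξ| ^ p := by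
              have h6 := Real.rpow_le_rpow (hβnn j) hle hppos.le
              rwa [one_div, Real.rpow_inv_rpow hgnn hp0] at h6
            have h3 : ∑ ξ : V, |g ξ| ^ p = (∑ ξ ∈ A j, |f ξ| ^ p) / |1 - t| ^ p := by
              have e1 : ∀ ξ : V, |g ξ| ^ p
                  = if s j ≤ ξ then |f ξ| ^ p / |1 - t| ^ p else 0 := by
                intro ξ
                by_cases hξ : s j ≤ ξ
                · simp only [hgdef]
                  rw [if_pos hξ, if_pos hξ, abs_div,
                    Real.div_rpow (abs_nonneg _) (abs_nonneg _)]
                · simp only [hgdef]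
                  rw [if_neg hξ, if_neg hξ, abs_zero, Real.zero_rpow hp0]
              rw [Finset.sum_congr rfl fun ξ _ => e1 ξ, ← Finset.sum_filter,
                ← Finset.sum_div]
            rw [h3] at h2
            have h4 := (le_div_iff₀ (Real.rpow_pos_of_pos h1t p)).1 h2
            linarith [h4]
        have hup : |t| ^ p * a ^ p + |1 - t| ^ p * B ^ p ≤ ∑ ξ : V, |f ξ| ^ p := by
          rw [hBp, hT, Finset.mul_sum]
          calc |t| ^ p * a ^ p +
              ∑ j : Fin m, |1 - t| ^ p * betaD p u (s j) (Ds j) ^ p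
              ≤ |f ξs| ^ p + ∑ j : Fin m, ∑ ξ ∈ A j, |f ξ| ^ p :=
                add_le_add (le_of_eq hroot) (Finset.sum_le_sum fun j _ => hbranch j)
          _ = ∑ ξ ∈ insert ξs (Finset.univ.biUnion A), |f ξ| ^ p := by rw [hsplitsum]
          _ ≤ ∑ ξ : V, |f ξ| ^ p :=
                Finset.sum_le_sum_of_subset_of_nonneg (Finset.subset_univ _)
                  fun ξ _ _ => by positivity
        exact le_trans (scalar_holder hpq hapos hBpos t) hup
      calc S ^ (-(1 / q)) = (S ^ (1 - p)) ^ (1 / p) := hexp.symm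
      _ ≤ (∑ ξ : V, |f ξ| ^ p) ^ (1 / p) :=
          Real.rpow_le_rpow (Real.rpow_nonneg hSpos.le _) key (by positivity)
  -- ===== conclude =====
  rw [hmain, ← Real.rpow_mul hSpos.le]
  have hone : -(1 / q) * -q = 1 := by field_simp
  rw [hone, Real.rpow_one, hSdef, haq, hBq]
end
end

section
/- Fix 1 < p < ∞ and C* ≥ 1. Then there exists σ̂ > 0, depending only on p and C*, with the following property. Let (V, ≤) be a finite rooted tree, ψ : ℕ → [0, ∞) increasing with ψ(0) = 0, and suppose card V_{j−j₀}(ξ) ≤ C* 2^{ψ(j)−ψ(j₀)} for all j₀ ≤ j and all ξ of depth j₀. Let u be level-constant, u(ξ) = u_{|ξ|} > 0, and suppose that for some σ ∈ (0, σ̂) one has u_j 2^{−ψ(j)/p} ≥ σ^{−1/p'} u_{j−1} 2^{−ψ(j−1)/p} for all j ≥ 1, where p' = p/(p−1). Then for every ξ* ∈ V and every D ∈ J'_{ξ*}: S_D ≤ B_D ≤ 2 S_D, where B_D = 1/β_D and S_D = (∑_{ξ maximal in D} u(ξ)^{−p})^{−1/p}. -/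
open scoped Classical

noncomputable section

private lemma geom_tail_le {x : ℝ} (h0 : 0 ≤ x) (h1 : x < 1) (n : ℕ) :
    ∑ i ∈ Finset.range n, x ^ i ≤ (1 - x)⁻¹ :=
  le_trans ((summable_geometric_of_lt_one h0 h1).sum_le_tsum _ (fun i _ => pow_nonneg h0 i))
    (le_of_eq (tsum_geometric_of_lt_one h0 h1))

private lemma sum_pow_sub_le {s : ℝ} (h0 : 0 ≤ s) (h1 : s < 1) (m : ℕ) :
    ∑ j ∈ Finset.range m, s ^ (m - j) ≤ s * (1 - s)⁻¹ := by
  rw [← Finset.sum_range_reflect]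
  have : ∀ j ∈ Finset.range m, s ^ (m - (m - 1 - j)) = s * s ^ j := by
    intro j hj
    rw [Finset.mem_range] at hj
    have : m - (m - 1 - j) = j + 1 := by omega
    rw [this, pow_succ, mul_comm]
  rw [Finset.sum_congr rfl this, ← Finset.mul_sum]
  exact mul_le_mul_of_nonneg_left (geom_tail_le h0 h1 m) h0

private lemma sum_ite_pow_le {s : ℝ} (h0 : 0 ≤ s) (h1 : s < 1) (n j' : ℕ) :
    ∑ j ∈ Finset.range n, (if j' < j then s ^ (j - j') else 0) ≤ s * (1 - s)⁻¹ := by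
  have hsub : Finset.range n ⊆ Finset.range (j' + 1 + n) := by
    apply Finset.range_subset_range.2; omega
  have h2 : ∑ j ∈ Finset.range n, (if j' < j then s ^ (j - j') else 0)
      ≤ ∑ j ∈ Finset.range (j' + 1 + n), (if j' < j then s ^ (j - j') else 0) := by
    apply Finset.sum_le_sum_of_subset_of_nonneg hsub
    intro i _ _
    split <;> positivity
  refine le_trans h2 ?_
  rw [← Finset.sum_filter]
  have heq : (Finset.range (j' + 1 + n)).filter (fun j => j' < j)
      = Finset.Ico (j' + 1) (j' + 1 + n) := by
    ext j; simp only [Finset.mem_filter, Finset.mem_range, Finset.mem_Ico]; omega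
  rw [heq, Finset.sum_Ico_eq_sum_range]
  have : ∀ i ∈ Finset.range (j' + 1 + n - (j' + 1)), s ^ (j' + 1 + i - j') = s * s ^ i := by
    intro i _
    have : j' + 1 + i - j' = i + 1 := by omega
    rw [this, pow_succ, mul_comm]
  rw [Finset.sum_congr rfl this, ← Finset.mul_sum]
  exact mul_le_mul_of_nonneg_left (geom_tail_le h0 h1 _) h0

private lemma sum_filter_swap {α : Type*} (P Q : Finset α) (R : α → α → Prop)
    (h : α → α → ℝ) :
    ∑ x ∈ P, ∑ y ∈ Q.filter (fun y => R x y), h x y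
      = ∑ y ∈ Q, ∑ x ∈ P.filter (fun x => R x y), h x y := by
  simp only [Finset.sum_filter]
  exact Finset.sum_comm

private lemma holder_c {α : Type*} (S : Finset α) (a c : α → ℝ) {p q : ℝ}
    (hpq : Real.HolderConjugate p q)
    (ha : ∀ x ∈ S, 0 ≤ a x) (hc : ∀ x ∈ S, 0 < c x) :
    (∑ x ∈ S, a x) ^ q
      ≤ (∑ x ∈ S, a x * c x ^ (q - 1)) * (∑ x ∈ S, a x * (c x)⁻¹) ^ (q - 1) := by
  have hq1 : 1 < q := hpq.symm.lt
  have hq0 : 0 < q := lt_trans one_pos hq1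
  have hp0 : 0 < p := hpq.pos
  have e1 : (q - 1) * (1 / q) = 1 / p := by
    rw [sub_mul, one_mul, mul_one_div, div_self hq0.ne', one_div, one_div]
    linarith [hpq.inv_add_inv_eq_one]
  have h1 : 1 / q + 1 / p = 1 := by
    rw [one_div, one_div]; linarith [hpq.inv_add_inv_eq_one]
  set F : α → ℝ := fun x => (a x * c x ^ (q - 1)) ^ (1 / q) with hF
  set G : α → ℝ := fun x => (a x * (c x)⁻¹) ^ (1 / p) with hG
  have hFnn : ∀ x ∈ S, 0 ≤ F x := by
    intro x hx
    exact Real.rpow_nonneg (mul_nonneg (ha x hx) (Real.rpow_nonneg (hc x hx).le _)) _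
  have hGnn : ∀ x ∈ S, 0 ≤ G x := by
    intro x hx
    exact Real.rpow_nonneg (mul_nonneg (ha x hx) (inv_nonneg.2 (hc x hx).le)) _
  have hprod : ∀ x ∈ S, a x = F x * G x := by
    intro x hx
    rcases eq_or_lt_of_le (ha x hx) with h0 | hpos
    · simp only [hF, hG, ← h0, zero_mul,
        Real.zero_rpow (by positivity : (1:ℝ)/q ≠ 0),
        Real.zero_rpow (by positivity : (1:ℝ)/p ≠ 0), mul_zero]
    · have hcx := hc x hx
      rw [hF, hG]
      simp only
      rw [Real.mul_rpow hpos.le (Real.rpow_nonneg hcx.le _),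
        Real.mul_rpow hpos.le (inv_nonneg.2 hcx.le),
        ← Real.rpow_mul hcx.le, e1, Real.inv_rpow hcx.le, ← Real.rpow_neg hcx.le]
      rw [show a x ^ (1/q) * c x ^ (1/p) * (a x ^ (1/p) * c x ^ (-(1/p)))
          = (a x ^ (1/q) * a x ^ (1/p)) * (c x ^ (1/p) * c x ^ (-(1/p))) from by ring,
        ← Real.rpow_add hpos, ← Real.rpow_add hcx, h1, add_neg_cancel,
        Real.rpow_one, Real.rpow_zero, mul_one]
  have holder := Real.inner_le_Lp_mul_Lq S F G hpq.symm
  have hFq : ∀ x ∈ S, |F x| ^ q = a x * c x ^ (q - 1) := by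
    intro x hx
    rw [abs_of_nonneg (hFnn x hx), hF]
    simp only
    rw [← Real.rpow_mul (mul_nonneg (ha x hx) (Real.rpow_nonneg (hc x hx).le _)),
      one_div, inv_mul_cancel₀ hq0.ne', Real.rpow_one]
  have hGp : ∀ x ∈ S, |G x| ^ p = a x * (c x)⁻¹ := by
    intro x hx
    rw [abs_of_nonneg (hGnn x hx), hG]
    simp only
    rw [← Real.rpow_mul (mul_nonneg (ha x hx) (inv_nonneg.2 (hc x hx).le)),
      one_div, inv_mul_cancel₀ hp0.ne', Real.rpow_one]
  rw [Finset.sum_congr rfl hFq, Finset.sum_congr rfl hGp] at holder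
  have key : ∑ x ∈ S, a x
      ≤ (∑ x ∈ S, a x * c x ^ (q - 1)) ^ (1 / q) * (∑ x ∈ S, a x * (c x)⁻¹) ^ (1 / p) := by
    calc ∑ x ∈ S, a x = ∑ x ∈ S, F x * G x := Finset.sum_congr rfl hprod
    _ ≤ _ := holder
  have hS1 : (0:ℝ) ≤ ∑ x ∈ S, a x * c x ^ (q - 1) :=
    Finset.sum_nonneg fun x hx => mul_nonneg (ha x hx) (Real.rpow_nonneg (hc x hx).le _)
  have hS2 : (0:ℝ) ≤ ∑ x ∈ S, a x * (c x)⁻¹ :=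
    Finset.sum_nonneg fun x hx => mul_nonneg (ha x hx) (inv_nonneg.2 (hc x hx).le)
  have := Real.rpow_le_rpow (Finset.sum_nonneg fun x hx => ha x hx) key hq0.le
  refine le_trans this (le_of_eq ?_)
  rw [Real.mul_rpow (Real.rpow_nonneg hS1 _) (Real.rpow_nonneg hS2 _),
    ← Real.rpow_mul hS1, ← Real.rpow_mul hS2, one_div, inv_mul_cancel₀ hq0.ne',
    Real.rpow_one]
  congr 2
  rw [one_div]
  field_simp
  nlinarith [hpq.mul_eq_add]

private lemma treeDepth_lt_card {V : Type} [Fintype V] [PartialOrder V] (ξ : V) :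
    treeDepth ξ < Fintype.card V := by
  rw [treeDepth, Nat.card_eq_fintype_card]
  exact Fintype.card_subtype_lt (x := ξ) (lt_irrefl ξ)

private lemma treeDepth_strictMono {V : Type} [Fintype V] [PartialOrder V]
    {x y : V} (h : x < y) : treeDepth x < treeDepth y := by
  rw [treeDepth, treeDepth, Nat.card_eq_fintype_card, Nat.card_eq_fintype_card]
  have inj : Function.Injective
      (fun z : {η : V // η < x} => (⟨z.1, lt_trans z.2 h⟩ : {η : V // η < y})) := by
    intro z w hzw
    simpa [Subtype.ext_iff] using hzw
  apply Fintype.card_lt_of_injective_of_notMem _ inj (b := ⟨x, h⟩)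
  rintro ⟨⟨z, hz⟩, hzx⟩
  rw [Subtype.ext_iff] at hzx
  simp only at hzx
  exact absurd (hzx ▸ hz) (lt_irrefl x)

private lemma treeDepth_mono {V : Type} [Fintype V] [PartialOrder V]
    {x y : V} (h : x ≤ y) : treeDepth x ≤ treeDepth y := by
  rcases eq_or_lt_of_le h with rfl | h
  · exact le_rfl
  · exact (treeDepth_strictMono h).le

private lemma natcard_eq_filter {V : Type} [Fintype V] [PartialOrder V] (ξ' : V) (j : ℕ) :
    Nat.card {η : V // ξ' ≤ η ∧ treeDepth η = j}
      = (Finset.univ.filter (fun η : V => ξ' ≤ η ∧ treeDepth η = j)).card := by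
  rw [Nat.card_eq_fintype_card]
  exact Fintype.card_subtype _

/-- the reduction lemma: under the growth condition on the tree and the
condition `(σ)` on the level-constant weight `u`, the recursively defined quantity
`B_D = β_D⁻¹` is comparable (between `S_D` and `2 S_D`) with
`S_D = (∑_{ξ maximal in D} u(ξ)^{−p})^{−1/p}`. -/
theorem statement8 (p : ℝ) (hp : 1 < p) (Cstar : ℝ) (hC : 1 ≤ Cstar) :
    ∃ σhat : ℝ, 0 < σhat ∧
      ∀ (V : Type) [Fintype V] [PartialOrder V], IsRootedTree V →
      ∀ ψ : ℕ → ℝ, (∀ j : ℕ, 0 ≤ ψ j) → Monotone ψ → ψ 0 = 0 →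
      (∀ j₀ j : ℕ, j₀ ≤ j → ∀ ξ : V, treeDepth ξ = j₀ →
        (Nat.card {η : V // ξ ≤ η ∧ treeDepth η = j} : ℝ)
          ≤ Cstar * (2 : ℝ) ^ (ψ j - ψ j₀)) →
      ∀ u : ℕ → ℝ, (∀ j : ℕ, 0 < u j) →
      ∀ σ : ℝ, 0 < σ → σ < σhat →
      (∀ j : ℕ, σ ^ (-((p - 1) / p)) * (u j * (2 : ℝ) ^ (-(ψ j) / p))
          ≤ u (j + 1) * (2 : ℝ) ^ (-(ψ (j + 1)) / p)) →
      ∀ ξs : V, ∀ D : Finset V, Jfam ξs D →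
        (∑ ξ ∈ D.filter (fun ξ => ∀ ζ ∈ D, ¬ ξ < ζ),
            (u (treeDepth ξ)) ^ (-p)) ^ (-(1 / p))
          ≤ (betaD p (fun ξ : V => u (treeDepth ξ)) ξs D)⁻¹ ∧
        (betaD p (fun ξ : V => u (treeDepth ξ)) ξs D)⁻¹
          ≤ 2 * (∑ ξ ∈ D.filter (fun ξ => ∀ ζ ∈ D, ¬ ξ < ζ),
              (u (treeDepth ξ)) ^ (-p)) ^ (-(1 / p)) := by
  have hp0 : 0 < p := lt_trans one_pos hp
  have hpm1 : 0 < p - 1 := sub_pos.2 hp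
  set q : ℝ := p / (p - 1) with hq_def
  have hpq : p.HolderConjugate q := Real.HolderConjugate.conjExponent hp
  clear_value q
  have hq1 : 1 < q := hpq.symm.lt
  have hq0 : 0 < q := lt_trans one_pos hq1
  have hqm1 : 0 < q - 1 := sub_pos.2 hq1
  have hq_sub : (p - 1) * (q - 1) = 1 := by
    rw [hq_def]; field_simp; ring
  have hpq_sum : 1 / q + 1 / p = 1 := by
    rw [one_div, one_div]; linarith [hpq.inv_add_inv_eq_one]
  have hCpos : 0 < Cstar := lt_of_lt_of_le one_pos hC
  set s₀ : ℝ := (2:ℝ) ^ (-(p-1)) / (2 * Cstar) with hs₀_def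
  clear_value s₀
  have hs₀pos : 0 < s₀ := by
    rw [hs₀_def]
    apply div_pos (Real.rpow_pos_of_pos two_pos _) (by linarith)
  have h2neg : (2:ℝ) ^ (-(p-1)) ≤ 1 := by
    have := Real.rpow_le_one_of_one_le_of_nonpos one_le_two (by linarith : -(p-1) ≤ 0)
    exact this
  have hs₀le2 : s₀ ≤ (2:ℝ) ^ (-(p-1)) := by
    rw [hs₀_def]
    apply div_le_self (Real.rpow_pos_of_pos two_pos _).le (by linarith)
  have hs₀half : s₀ ≤ 1 / 2 := by
    rw [hs₀_def]
    rw [div_le_div_iff₀ (by linarith) (by norm_num)]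
    nlinarith
  have hs₀lt1 : s₀ < 1 := lt_of_le_of_lt hs₀half (by norm_num)
  refine ⟨s₀ ^ (2/(p-1)), Real.rpow_pos_of_pos hs₀pos _, ?_⟩
  intro V _inst1 _inst2 hTree ψ hψnn hψmono hψzero hcard u hu σ hσpos hσlt hσcond ξs D hD
  -- basic σ, s facts
  set s : ℝ := σ ^ ((p-1)/2) with hs_def
  have hspos : 0 < s := Real.rpow_pos_of_pos hσpos _
  clear_value s
  have hs_lt : s < s₀ := by
    have h1 : s < (s₀ ^ (2/(p-1))) ^ ((p-1)/2) := by
      rw [hs_def]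
      exact Real.rpow_lt_rpow hσpos.le hσlt (by positivity)
    rwa [← Real.rpow_mul hs₀pos.le,
      show (2/(p-1)) * ((p-1)/2) = 1 from by field_simp, Real.rpow_one] at h1
  have hs_half : s ≤ 1/2 := le_trans hs_lt.le hs₀half
  have hs1 : s < 1 := by linarith
  set s' : ℝ := s ^ (q-1) with hs'_def
  have hs'pos : 0 < s' := Real.rpow_pos_of_pos hspos _
  clear_value s'
  have hs'half : s' ≤ 1/2 := by
    have h1 : s' ≤ s₀ ^ (q-1) := by
      rw [hs'_def]; exact Real.rpow_le_rpow hspos.le hs_lt.le hqm1.le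
    have h2 : s₀ ^ (q-1) ≤ ((2:ℝ) ^ (-(p-1))) ^ (q-1) :=
      Real.rpow_le_rpow hs₀pos.le hs₀le2 hqm1.le
    have h3 : ((2:ℝ) ^ (-(p-1))) ^ (q-1) = 1/2 := by
      rw [← Real.rpow_mul two_pos.le, show (-(p-1)) * (q-1) = -1 from by
        rw [neg_mul]; rw [hq_sub], Real.rpow_neg_one]
      norm_num
    calc s' ≤ ((2:ℝ) ^ (-(p-1))) ^ (q-1) := le_trans h1 h2
    _ = 1/2 := h3
  have hs'1 : s' < 1 := lt_of_le_of_lt hs'half (by norm_num)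
  set K : ℝ := (Cstar * (s * (1-s)⁻¹)) ^ (q-1) with hK_def
  clear_value K
  have h1s : (0:ℝ) < 1 - s := by linarith
  have h1s' : (0:ℝ) < 1 - s' := by linarith
  have hKnn : 0 ≤ K := by
    rw [hK_def]
    exact Real.rpow_nonneg (mul_nonneg hCpos.le (mul_nonneg hspos.le (inv_nonneg.2 h1s.le))) _
  have h2qhalf : ((2:ℝ) ^ (-(p-1))) ^ (q-1) = 1/2 := by
    rw [← Real.rpow_mul two_pos.le, show (-(p-1)) * (q-1) = -1 from by
      rw [neg_mul]; rw [hq_sub], Real.rpow_neg_one]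
    norm_num
  have hKbound : K * (s' * (1-s')⁻¹) ≤ 1 := by
    have hinv2 : (1-s)⁻¹ ≤ 2 := by
      rw [show (2:ℝ) = (2⁻¹)⁻¹ from by norm_num]
      exact inv_anti₀ (by norm_num) (by linarith)
    have hinv2' : (1-s')⁻¹ ≤ 2 := by
      rw [show (2:ℝ) = (2⁻¹)⁻¹ from by norm_num]
      exact inv_anti₀ (by norm_num) (by linarith)
    have step1 : Cstar * (s * (1-s)⁻¹) ≤ 2 * (Cstar * s) := by
      have h := mul_le_mul_of_nonneg_left hinv2 hspos.le
      calc Cstar * (s * (1-s)⁻¹) ≤ Cstar * (s * 2) := mul_le_mul_of_nonneg_left h hCpos.le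
      _ = 2 * (Cstar * s) := by ring
    have step2 : K ≤ (2 * (Cstar * s)) ^ (q-1) := by
      rw [hK_def]
      exact Real.rpow_le_rpow (mul_nonneg hCpos.le (mul_nonneg hspos.le (inv_nonneg.2 h1s.le)))
        step1 hqm1.le
    have step3 : s' * (1-s')⁻¹ ≤ 2 * s' := by
      have h := mul_le_mul_of_nonneg_left hinv2' hs'pos.le
      linarith
    have step4 : K * (s' * (1-s')⁻¹) ≤ (2 * (Cstar * s)) ^ (q-1) * (2 * s') := by
      apply mul_le_mul step2 step3 (by positivity) (by positivity)
    have h2C : 2 * Cstar * s₀ = (2:ℝ) ^ (-(p-1)) := by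
      rw [hs₀_def]; field_simp
    have step6 : 2 * (Cstar * s) * s ≤ (2:ℝ) ^ (-(p-1)) := by
      have hss : s * s ≤ s₀ * s₀ := mul_le_mul hs_lt.le hs_lt.le hspos.le hs₀pos.le
      have h1 : 2 * (Cstar * s) * s ≤ 2 * Cstar * (s₀ * s₀) := by
        calc 2 * (Cstar * s) * s = 2 * Cstar * (s * s) := by ring
        _ ≤ 2 * Cstar * (s₀ * s₀) := by
          apply mul_le_mul_of_nonneg_left hss (by positivity)
      have h2 : 2 * Cstar * (s₀ * s₀) ≤ 2 * Cstar * s₀ := by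
        have : s₀ * s₀ ≤ s₀ * 1 := mul_le_mul_of_nonneg_left hs₀lt1.le hs₀pos.le
        have := mul_le_mul_of_nonneg_left this (by positivity : (0:ℝ) ≤ 2 * Cstar)
        linarith
      rw [← h2C]; linarith
    have step5 : (2 * (Cstar * s)) ^ (q-1) * (2 * s')
        = 2 * ((2 * (Cstar * s) * s) ^ (q-1)) := by
      rw [hs'_def]
      rw [show (2 * (Cstar * s)) ^ (q-1) * (2 * s ^ (q-1))
          = 2 * ((2 * (Cstar * s)) ^ (q-1) * s ^ (q-1)) from by ring]
      rw [← Real.mul_rpow (by positivity) hspos.le]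
    have step7 : ((2 * (Cstar * s)) * s) ^ (q-1) ≤ 1/2 := by
      calc ((2 * (Cstar * s)) * s) ^ (q-1) ≤ ((2:ℝ) ^ (-(p-1))) ^ (q-1) :=
        Real.rpow_le_rpow (by positivity) step6 hqm1.le
      _ = 1/2 := h2qhalf
    calc K * (s' * (1-s')⁻¹) ≤ (2 * (Cstar * s)) ^ (q-1) * (2 * s') := step4
    _ = 2 * ((2 * (Cstar * s) * s) ^ (q-1)) := step5
    _ ≤ 2 * (1/2) := by linarith [step7]
    _ = 1 := by norm_num
  -- tree and weight facts
  set M : Finset V := D.filter (fun ξ => ∀ ζ ∈ D, ¬ ξ < ζ) with hM_def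
  set P : Finset V := Finset.univ.filter (fun ξ : V => ξs ≤ ξ) with hP_def
  have hMsub : ∀ {ξ : V}, ξ ∈ M → ξ ∈ D := fun h => (Finset.mem_filter.1 h).1
  have hMmax : ∀ {ξ : V}, ξ ∈ M → ∀ ζ ∈ D, ¬ ξ < ζ := fun h => (Finset.mem_filter.1 h).2
  have hMP : M ⊆ P := by
    intro ξ hξ
    rw [hP_def]
    exact Finset.mem_filter.2 ⟨Finset.mem_univ _, hD.2.1 ξ (hMsub hξ)⟩
  have hcount : ∀ (ξ' : V) (j : ℕ), treeDepth ξ' ≤ j →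
      ((Finset.univ.filter (fun η : V => ξ' ≤ η ∧ treeDepth η = j)).card : ℝ)
        ≤ Cstar * 2 ^ (ψ j - ψ (treeDepth ξ')) := by
    intro ξ' j hj
    rw [← natcard_eq_filter]
    exact hcard _ j hj ξ' rfl
  set ρ : ℝ := σ ^ (p-1) with hρ_def
  have hρpos : 0 < ρ := Real.rpow_pos_of_pos hσpos _
  have hρs : ρ = s * s := by
    rw [hρ_def, hs_def, ← Real.rpow_add hσpos]
    congr 1; ring
  clear_value ρ
  have hw : ∀ m : ℕ, u (m+1) ^ (-p) * (2:ℝ) ^ (ψ (m+1)) ≤ ρ * (u m ^ (-p) * (2:ℝ) ^ (ψ m)) := by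
    intro m
    have h := hσcond m
    have hXpos : 0 < σ ^ (-((p - 1) / p)) * (u m * (2:ℝ) ^ (-(ψ m) / p)) := by
      apply mul_pos (Real.rpow_pos_of_pos hσpos _)
      exact mul_pos (hu m) (Real.rpow_pos_of_pos two_pos _)
    have h2 := Real.rpow_le_rpow_of_nonpos hXpos h (neg_nonpos.2 hp0.le)
    rw [Real.mul_rpow (hu (m+1)).le (Real.rpow_nonneg two_pos.le _),
        Real.mul_rpow (Real.rpow_nonneg hσpos.le _)
          (mul_nonneg (hu m).le (Real.rpow_nonneg two_pos.le _)),
        Real.mul_rpow (hu m).le (Real.rpow_nonneg two_pos.le _),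
        ← Real.rpow_mul two_pos.le, ← Real.rpow_mul two_pos.le, ← Real.rpow_mul hσpos.le,
        show -ψ (m+1) / p * (-p) = ψ (m+1) from by field_simp,
        show -ψ m / p * (-p) = ψ m from by field_simp,
        show -((p-1)/p) * (-p) = p - 1 from by field_simp] at h2
    calc u (m+1) ^ (-p) * (2:ℝ) ^ (ψ (m+1)) ≤ σ ^ (p-1) * (u m ^ (-p) * 2 ^ (ψ m)) := h2
    _ = ρ * (u m ^ (-p) * 2 ^ (ψ m)) := by rw [hρ_def]
  have hwk : ∀ j k : ℕ, u (j+k) ^ (-p) * (2:ℝ) ^ (ψ (j+k))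
      ≤ ρ^k * (u j ^ (-p) * (2:ℝ) ^ (ψ j)) := by
    intro j k
    induction k with
    | zero => simp
    | succ k ih =>
      calc u (j+(k+1)) ^ (-p) * (2:ℝ) ^ (ψ (j+(k+1)))
          ≤ ρ * (u (j+k) ^ (-p) * 2 ^ (ψ (j+k))) := hw (j+k)
        _ ≤ ρ * (ρ^k * (u j ^ (-p) * 2 ^ (ψ j))) := mul_le_mul_of_nonneg_left ih hρpos.le
        _ = ρ^(k+1) * (u j ^ (-p) * 2 ^ (ψ j)) := by ring
  have hdecay2 : ∀ j' j : ℕ, j' ≤ j →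
      u j ^ (-p) ≤ ρ ^ (j - j') * ((2:ℝ) ^ (ψ j' - ψ j) * u j' ^ (-p)) := by
    intro j' j hj
    have h := hwk j' (j - j')
    rw [Nat.add_sub_cancel' hj] at h
    have e0 : u j ^ (-p) = (u j ^ (-p) * 2 ^ (ψ j)) * (2:ℝ) ^ (-ψ j) := by
      rw [mul_assoc, ← Real.rpow_add two_pos, add_neg_cancel, Real.rpow_zero, mul_one]
    rw [e0]
    have h1 := mul_le_mul_of_nonneg_right h (Real.rpow_nonneg two_pos.le (-ψ j))
    refine le_trans h1 (le_of_eq ?_)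
    have e1 : (2:ℝ) ^ (ψ j') * (2:ℝ) ^ (-ψ j) = 2 ^ (ψ j' - ψ j) := by
      rw [← Real.rpow_add two_pos, sub_eq_add_neg]
    calc ρ^(j-j') * (u j' ^ (-p) * 2 ^ (ψ j')) * (2:ℝ) ^ (-ψ j)
        = ρ^(j-j') * ((2:ℝ)^(ψ j') * (2:ℝ)^(-ψ j) * u j' ^ (-p)) := by ring
      _ = ρ^(j-j') * ((2:ℝ)^(ψ j' - ψ j) * u j' ^ (-p)) := by rw [e1]
  have hadecay : ∀ ξ' ξ : V, ξ' ≤ ξ →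
      u (treeDepth ξ) ^ (-p) ≤ ρ ^ (treeDepth ξ - treeDepth ξ') *
        ((2:ℝ) ^ (ψ (treeDepth ξ') - ψ (treeDepth ξ)) * u (treeDepth ξ') ^ (-p)) :=
    fun ξ' ξ h => hdecay2 _ _ (treeDepth_mono h)
  -- the A-bound
  have hAbound : ∀ ξ' : V,
      ∑ ξ ∈ M.filter (fun ξ => ξ' < ξ), u (treeDepth ξ) ^ (-p) * ((s ^ treeDepth ξ : ℝ))⁻¹
        ≤ Cstar * ((s ^ treeDepth ξ' : ℝ)⁻¹ * u (treeDepth ξ') ^ (-p)) * (s * (1-s)⁻¹) := by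
    intro ξ'
    rw [← Finset.sum_fiberwise_of_maps_to (g := treeDepth) (t := Finset.range (Fintype.card V))
      (fun ξ _ => Finset.mem_range.2 (treeDepth_lt_card ξ)) _]
    have hC0nn : (0:ℝ) ≤ Cstar * ((s ^ treeDepth ξ' : ℝ)⁻¹ * u (treeDepth ξ') ^ (-p)) :=
      mul_nonneg hCpos.le (mul_nonneg (inv_nonneg.2 (pow_pos hspos _).le)
        (Real.rpow_pos_of_pos (hu _) _).le)
    have hfib : ∀ j ∈ Finset.range (Fintype.card V),
        (∑ ξ ∈ (M.filter (fun ξ => ξ' < ξ)).filter (fun ξ => treeDepth ξ = j),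
          u (treeDepth ξ) ^ (-p) * ((s ^ treeDepth ξ : ℝ))⁻¹)
        ≤ (if treeDepth ξ' < j then
            (Cstar * ((s ^ treeDepth ξ' : ℝ)⁻¹ * u (treeDepth ξ') ^ (-p))) * s ^ (j - treeDepth ξ')
          else 0) := by
      intro j hj
      by_cases hjj : treeDepth ξ' < j
      · rw [if_pos hjj]
        have hstepel : ∀ ξ ∈ (M.filter (fun ξ => ξ' < ξ)).filter (fun ξ => treeDepth ξ = j),
            u (treeDepth ξ) ^ (-p) * ((s ^ treeDepth ξ : ℝ))⁻¹
              ≤ s ^ (j - treeDepth ξ') * ((s ^ treeDepth ξ' : ℝ)⁻¹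
                  * ((2:ℝ) ^ (ψ (treeDepth ξ') - ψ j) * u (treeDepth ξ') ^ (-p))) := by
          intro ξ hξ
          obtain ⟨hξ1, hdp⟩ := Finset.mem_filter.1 hξ
          obtain ⟨hξM, hlt⟩ := Finset.mem_filter.1 hξ1
          have hdec := hadecay ξ' ξ hlt.le
          rw [hdp] at hdec
          rw [hdp]
          have hsj : (0:ℝ) ≤ ((s ^ j : ℝ))⁻¹ := inv_nonneg.2 (pow_pos hspos _).le
          have h1 := mul_le_mul_of_nonneg_right hdec hsj
          refine le_trans h1 (le_of_eq ?_)
          have e2 : ρ^(j - treeDepth ξ') * ((s^j : ℝ))⁻¹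
              = s^(j - treeDepth ξ') * ((s^(treeDepth ξ') : ℝ))⁻¹ := by
            rw [hρs]
            have e3 : (s : ℝ) ^ j = s ^ (treeDepth ξ') * s ^ (j - treeDepth ξ') := by
              rw [← pow_add]; congr 1; omega
            rw [e3, mul_pow, mul_inv]
            field_simp
          calc ρ^(j - treeDepth ξ')
                * ((2:ℝ)^(ψ (treeDepth ξ') - ψ j) * u (treeDepth ξ') ^ (-p)) * ((s^j : ℝ))⁻¹
              = (ρ^(j - treeDepth ξ') * ((s^j : ℝ))⁻¹)
                * ((2:ℝ)^(ψ (treeDepth ξ') - ψ j) * u (treeDepth ξ') ^ (-p)) := by ring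
            _ = (s^(j - treeDepth ξ') * ((s^(treeDepth ξ') : ℝ))⁻¹)
                * ((2:ℝ)^(ψ (treeDepth ξ') - ψ j) * u (treeDepth ξ') ^ (-p)) := by rw [e2]
            _ = s ^ (j - treeDepth ξ') * ((s ^ treeDepth ξ' : ℝ)⁻¹
                  * ((2:ℝ) ^ (ψ (treeDepth ξ') - ψ j) * u (treeDepth ξ') ^ (-p))) := by ring
        have hbnn : (0:ℝ) ≤ s ^ (j - treeDepth ξ') * ((s ^ treeDepth ξ' : ℝ)⁻¹
            * ((2:ℝ) ^ (ψ (treeDepth ξ') - ψ j) * u (treeDepth ξ') ^ (-p))) := by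
          apply mul_nonneg (pow_pos hspos _).le
          apply mul_nonneg (inv_nonneg.2 (pow_pos hspos _).le)
          exact mul_nonneg (Real.rpow_nonneg two_pos.le _) (Real.rpow_pos_of_pos (hu _) _).le
        have hcard2 : (((M.filter (fun ξ => ξ' < ξ)).filter (fun ξ => treeDepth ξ = j)).card : ℝ)
            ≤ Cstar * 2 ^ (ψ j - ψ (treeDepth ξ')) := by
          refine le_trans ?_ (hcount ξ' j hjj.le)
          have hsub : (M.filter (fun ξ => ξ' < ξ)).filter (fun ξ => treeDepth ξ = j)
              ⊆ Finset.univ.filter (fun η : V => ξ' ≤ η ∧ treeDepth η = j) := by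
            intro ξ hξ
            obtain ⟨hξ1, hdp⟩ := Finset.mem_filter.1 hξ
            obtain ⟨_, hlt⟩ := Finset.mem_filter.1 hξ1
            exact Finset.mem_filter.2 ⟨Finset.mem_univ _, hlt.le, hdp⟩
          exact_mod_cast Nat.cast_le.2 (Finset.card_le_card hsub)
        calc ∑ ξ ∈ (M.filter (fun ξ => ξ' < ξ)).filter (fun ξ => treeDepth ξ = j),
              u (treeDepth ξ) ^ (-p) * ((s ^ treeDepth ξ : ℝ))⁻¹
            ≤ (((M.filter (fun ξ => ξ' < ξ)).filter (fun ξ => treeDepth ξ = j)).card : ℝ)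
              * (s ^ (j - treeDepth ξ') * ((s ^ treeDepth ξ' : ℝ)⁻¹
                  * ((2:ℝ) ^ (ψ (treeDepth ξ') - ψ j) * u (treeDepth ξ') ^ (-p)))) := by
              have := Finset.sum_le_card_nsmul _ _ _ hstepel
              rwa [nsmul_eq_mul] at this
          _ ≤ (Cstar * 2 ^ (ψ j - ψ (treeDepth ξ')))
              * (s ^ (j - treeDepth ξ') * ((s ^ treeDepth ξ' : ℝ)⁻¹
                  * ((2:ℝ) ^ (ψ (treeDepth ξ') - ψ j) * u (treeDepth ξ') ^ (-p)))) :=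
              mul_le_mul_of_nonneg_right hcard2 hbnn
          _ = (Cstar * ((s ^ treeDepth ξ' : ℝ)⁻¹ * u (treeDepth ξ') ^ (-p)))
              * s ^ (j - treeDepth ξ') := by
              have h2c : (2:ℝ)^(ψ j - ψ (treeDepth ξ')) * (2:ℝ)^(ψ (treeDepth ξ') - ψ j) = 1 := by
                rw [← Real.rpow_add two_pos,
                  show (ψ j - ψ (treeDepth ξ')) + (ψ (treeDepth ξ') - ψ j) = 0 from by ring,
                  Real.rpow_zero]
              linear_combination (Cstar * s^(j - treeDepth ξ') * ((s^(treeDepth ξ') : ℝ))⁻¹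
                * u (treeDepth ξ') ^ (-p)) * h2c
      · rw [if_neg hjj]
        have hempty : (M.filter (fun ξ => ξ' < ξ)).filter (fun ξ => treeDepth ξ = j) = ∅ := by
          apply Finset.eq_empty_of_forall_notMem
          intro ξ hξ
          obtain ⟨hξ1, hdp⟩ := Finset.mem_filter.1 hξ
          obtain ⟨_, hlt⟩ := Finset.mem_filter.1 hξ1
          exact hjj (hdp ▸ treeDepth_strictMono hlt)
        rw [hempty, Finset.sum_empty]
    refine le_trans (Finset.sum_le_sum hfib) ?_
    have e4 : ∀ j ∈ Finset.range (Fintype.card V),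
        (if treeDepth ξ' < j then
            (Cstar * ((s ^ treeDepth ξ' : ℝ)⁻¹ * u (treeDepth ξ') ^ (-p))) * s ^ (j - treeDepth ξ')
          else 0)
        = (Cstar * ((s ^ treeDepth ξ' : ℝ)⁻¹ * u (treeDepth ξ') ^ (-p)))
          * (if treeDepth ξ' < j then s ^ (j - treeDepth ξ') else 0) := by
      intro j _
      split_ifs <;> ring
    rw [Finset.sum_congr rfl e4, ← Finset.mul_sum]
    exact mul_le_mul_of_nonneg_left (sum_ite_pow_le hspos.le hs1 _ _) hC0nn
  -- N and the key estimate
  set Nf : V → ℝ := fun ξ' => ∑ ξ ∈ M.filter (fun ξ => ξ' ≤ ξ), u (treeDepth ξ) ^ (-p)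
    with hNf_def
  have hNf_nonneg : ∀ ξ' : V, 0 ≤ Nf ξ' := by
    intro ξ'
    rw [hNf_def]
    exact Finset.sum_nonneg fun ξ _ => (Real.rpow_pos_of_pos (hu _) _).le
  have hsw : ∀ k : ℕ, ((s ^ k : ℝ)) ^ (q-1) = s' ^ k := by
    intro k
    rw [hs'_def, ← Real.rpow_natCast s k, ← Real.rpow_mul hspos.le, mul_comm,
      Real.rpow_mul hspos.le, Real.rpow_natCast]
  have hUN_q_diag : ∀ ξ' ∈ M, (u (treeDepth ξ') * Nf ξ') ^ q = u (treeDepth ξ') ^ (-p) := by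
    intro ξ' hξ'
    have hsingle : M.filter (fun ξ => ξ' ≤ ξ) = {ξ'} := by
      apply Finset.ext
      intro ξ
      simp only [Finset.mem_filter, Finset.mem_singleton]
      constructor
      · rintro ⟨hξM, hle⟩
        by_contra hne
        exact (hMmax hξ') ξ (hMsub hξM) (lt_of_le_of_ne hle (fun h => hne h.symm))
      · rintro rfl
        exact ⟨hξ', le_refl _⟩
    have hNval : Nf ξ' = u (treeDepth ξ') ^ (-p) := by
      rw [hNf_def]
      simp only
      rw [hsingle, Finset.sum_singleton]
    rw [hNval]
    have hU := hu (treeDepth ξ')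
    rw [show u (treeDepth ξ') * u (treeDepth ξ') ^ (-p) = u (treeDepth ξ') ^ (1 + -p) from by
      rw [Real.rpow_add hU, Real.rpow_one]]
    rw [← Real.rpow_mul hU.le, show (1 + -p) * q = -p from by linear_combination -hq_sub]
  have hterm : ∀ ξ' : V, ξ' ∉ M →
      (u (treeDepth ξ') * Nf ξ') ^ q
        ≤ K * ∑ ξ ∈ M.filter (fun ξ => ξ' < ξ),
            u (treeDepth ξ) ^ (-p) * s' ^ (treeDepth ξ - treeDepth ξ') := by
    intro ξ' hξ'
    have haS : ∀ x ∈ M.filter (fun ξ => ξ' < ξ), (0:ℝ) ≤ u (treeDepth x) ^ (-p) :=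
      fun x _ => (Real.rpow_pos_of_pos (hu _) _).le
    have hcS : ∀ x ∈ M.filter (fun ξ => ξ' < ξ), (0:ℝ) < (s ^ treeDepth x : ℝ) :=
      fun x _ => pow_pos hspos _
    have hhol := holder_c (M.filter (fun ξ => ξ' < ξ)) (fun ξ => u (treeDepth ξ) ^ (-p))
      (fun ξ => (s ^ treeDepth ξ : ℝ)) hpq haS hcS
    have hNS : Nf ξ' = ∑ ξ ∈ M.filter (fun ξ => ξ' < ξ), u (treeDepth ξ) ^ (-p) := by
      rw [hNf_def]
      simp only
      congr 1
      apply Finset.filter_congr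
      intro ξ hξ
      constructor
      · intro hle
        exact lt_of_le_of_ne hle (fun h => hξ' (h ▸ hξ))
      · exact le_of_lt
    have hBle := hAbound ξ'
    have hBnn : (0:ℝ) ≤ ∑ ξ ∈ M.filter (fun ξ => ξ' < ξ),
        u (treeDepth ξ) ^ (-p) * ((s ^ treeDepth ξ : ℝ))⁻¹ :=
      Finset.sum_nonneg fun x hx => mul_nonneg (haS x hx) (inv_nonneg.2 (hcS x hx).le)
    have hCsum_nn : (0:ℝ) ≤ ∑ ξ ∈ M.filter (fun ξ => ξ' < ξ),
        u (treeDepth ξ) ^ (-p) * ((s ^ treeDepth ξ : ℝ)) ^ (q-1) :=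
      Finset.sum_nonneg fun x hx => mul_nonneg (haS x hx) (Real.rpow_nonneg (hcS x hx).le _)
    have h2 : (∑ ξ ∈ M.filter (fun ξ => ξ' < ξ), u (treeDepth ξ) ^ (-p)) ^ q
        ≤ (∑ ξ ∈ M.filter (fun ξ => ξ' < ξ),
            u (treeDepth ξ) ^ (-p) * ((s ^ treeDepth ξ : ℝ)) ^ (q-1))
          * (Cstar * ((s ^ treeDepth ξ' : ℝ)⁻¹ * u (treeDepth ξ') ^ (-p))
              * (s * (1-s)⁻¹)) ^ (q-1) := by
      refine le_trans hhol (mul_le_mul_of_nonneg_left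
        (Real.rpow_le_rpow hBnn hBle hqm1.le) hCsum_nn)
    have hexp : (Cstar * ((s ^ treeDepth ξ' : ℝ)⁻¹ * u (treeDepth ξ') ^ (-p))
          * (s * (1-s)⁻¹)) ^ (q-1)
        = K * (((s ^ treeDepth ξ' : ℝ)⁻¹) ^ (q-1) * (u (treeDepth ξ') ^ (-p)) ^ (q-1)) := by
      rw [show Cstar * ((s ^ treeDepth ξ' : ℝ)⁻¹ * u (treeDepth ξ') ^ (-p)) * (s * (1-s)⁻¹)
          = (Cstar * (s * (1-s)⁻¹)) * ((s ^ treeDepth ξ' : ℝ)⁻¹ * u (treeDepth ξ') ^ (-p))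
          from by ring]
      rw [Real.mul_rpow (mul_nonneg hCpos.le (mul_nonneg hspos.le (inv_nonneg.2 h1s.le)))
          (mul_nonneg (inv_nonneg.2 (pow_pos hspos _).le) (Real.rpow_pos_of_pos (hu _) _).le),
        Real.mul_rpow (inv_nonneg.2 (pow_pos hspos _).le) (Real.rpow_pos_of_pos (hu _) _).le,
        hK_def]
    have hcancel : u (treeDepth ξ') ^ q * (u (treeDepth ξ') ^ (-p)) ^ (q-1) = 1 := by
      rw [← Real.rpow_mul (hu _).le, ← Real.rpow_add (hu _),
        show q + (-p)*(q-1) = 0 from by linear_combination -hq_sub, Real.rpow_zero]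
    have hmerge : (((s ^ treeDepth ξ' : ℝ))⁻¹) ^ (q-1)
          * (∑ ξ ∈ M.filter (fun ξ => ξ' < ξ),
              u (treeDepth ξ) ^ (-p) * ((s ^ treeDepth ξ : ℝ)) ^ (q-1))
        = ∑ ξ ∈ M.filter (fun ξ => ξ' < ξ),
            u (treeDepth ξ) ^ (-p) * s' ^ (treeDepth ξ - treeDepth ξ') := by
      rw [Finset.mul_sum]
      refine Finset.sum_congr rfl fun ξ hξ => ?_
      have hlt : ξ' < ξ := (Finset.mem_filter.1 hξ).2
      have hle : treeDepth ξ' ≤ treeDepth ξ := (treeDepth_strictMono hlt).le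
      rw [show (((s ^ treeDepth ξ' : ℝ))⁻¹) ^ (q-1)
            * (u (treeDepth ξ) ^ (-p) * ((s ^ treeDepth ξ : ℝ)) ^ (q-1))
          = u (treeDepth ξ) ^ (-p)
            * ((((s ^ treeDepth ξ' : ℝ))⁻¹) ^ (q-1) * ((s ^ treeDepth ξ : ℝ)) ^ (q-1))
          from by ring]
      congr 1
      rw [← Real.mul_rpow (inv_nonneg.2 (pow_pos hspos _).le) (pow_pos hspos _).le]
      rw [show ((s ^ treeDepth ξ' : ℝ)⁻¹ * s ^ treeDepth ξ : ℝ)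
            = s ^ (treeDepth ξ - treeDepth ξ') from by
        rw [pow_sub₀ s hspos.ne' hle]; ring]
      exact hsw _
    have hNfq : (u (treeDepth ξ') * Nf ξ') ^ q
        = u (treeDepth ξ') ^ q * (Nf ξ') ^ q :=
      Real.mul_rpow (hu _).le (hNf_nonneg ξ')
    calc (u (treeDepth ξ') * Nf ξ') ^ q = u (treeDepth ξ') ^ q * (Nf ξ') ^ q := hNfq
      _ ≤ u (treeDepth ξ') ^ q * ((∑ ξ ∈ M.filter (fun ξ => ξ' < ξ),
            u (treeDepth ξ) ^ (-p) * ((s ^ treeDepth ξ : ℝ)) ^ (q-1))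
          * (Cstar * ((s ^ treeDepth ξ' : ℝ)⁻¹ * u (treeDepth ξ') ^ (-p))
              * (s * (1-s)⁻¹)) ^ (q-1)) := by
          apply mul_le_mul_of_nonneg_left _ (Real.rpow_pos_of_pos (hu _) _).le
          rw [hNS]
          exact h2
      _ = (u (treeDepth ξ') ^ q * (u (treeDepth ξ') ^ (-p)) ^ (q-1))
          * (K * ((((s ^ treeDepth ξ' : ℝ))⁻¹) ^ (q-1)
            * (∑ ξ ∈ M.filter (fun ξ => ξ' < ξ),
                u (treeDepth ξ) ^ (-p) * ((s ^ treeDepth ξ : ℝ)) ^ (q-1)))) := by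
          rw [hexp]; ring
      _ = K * ∑ ξ ∈ M.filter (fun ξ => ξ' < ξ),
            u (treeDepth ξ) ^ (-p) * s' ^ (treeDepth ξ - treeDepth ξ') := by
          rw [hcancel, hmerge, one_mul]
  have hchain : ∀ ξ ∈ M, ∑ ξ' ∈ (P \ M).filter (fun ξ' => ξ' < ξ),
      (s' : ℝ) ^ (treeDepth ξ - treeDepth ξ') ≤ s' * (1 - s')⁻¹ := by
    intro ξ _
    have hinj : ∀ x ∈ (P \ M).filter (fun ξ' => ξ' < ξ), ∀ y ∈ (P \ M).filter (fun ξ' => ξ' < ξ),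
        treeDepth x = treeDepth y → x = y := by
      intro x hx y hy hxy
      have hxξ : x < ξ := (Finset.mem_filter.1 hx).2
      have hyξ : y < ξ := (Finset.mem_filter.1 hy).2
      rcases hTree.2 ξ x y hxξ.le hyξ.le with h | h
      · rcases eq_or_lt_of_le h with h1 | h1
        · exact h1
        · exact absurd hxy (treeDepth_strictMono h1).ne
      · rcases eq_or_lt_of_le h with h1 | h1
        · exact h1.symm
        · exact absurd hxy (treeDepth_strictMono h1).ne'
    have himg := Finset.sum_image (s := (P \ M).filter (fun ξ' => ξ' < ξ)) (g := treeDepth)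
      (f := fun j => (s' : ℝ) ^ (treeDepth ξ - j)) hinj
    rw [← himg]
    have hsub2 : ((P \ M).filter (fun ξ' => ξ' < ξ)).image treeDepth
        ⊆ Finset.range (treeDepth ξ) := by
      intro j hj
      obtain ⟨x, hx, rfl⟩ := Finset.mem_image.1 hj
      exact Finset.mem_range.2 (treeDepth_strictMono (Finset.mem_filter.1 hx).2)
    refine le_trans (Finset.sum_le_sum_of_subset_of_nonneg hsub2
      (fun _ _ _ => pow_nonneg hs'pos.le _)) ?_
    exact sum_pow_sub_le hs'pos.le hs'1 (treeDepth ξ)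
  have hoff : ∑ ξ' ∈ P \ M, (u (treeDepth ξ') * Nf ξ') ^ q
      ≤ K * (s' * (1 - s')⁻¹) * (∑ ξ ∈ M, u (treeDepth ξ) ^ (-p)) := by
    have h1 : ∑ ξ' ∈ P \ M, (u (treeDepth ξ') * Nf ξ') ^ q
        ≤ ∑ ξ' ∈ P \ M, K * ∑ ξ ∈ M.filter (fun ξ => ξ' < ξ),
            u (treeDepth ξ) ^ (-p) * s' ^ (treeDepth ξ - treeDepth ξ') :=
      Finset.sum_le_sum fun ξ' hξ' => hterm ξ' (Finset.mem_sdiff.1 hξ').2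
    refine le_trans h1 ?_
    rw [← Finset.mul_sum]
    rw [sum_filter_swap (P \ M) M (fun ξ' ξ => ξ' < ξ)
        (fun ξ' ξ => u (treeDepth ξ) ^ (-p) * s' ^ (treeDepth ξ - treeDepth ξ'))]
    have h2 : ∀ ξ ∈ M, ∑ ξ' ∈ (P \ M).filter (fun ξ' => ξ' < ξ),
        u (treeDepth ξ) ^ (-p) * s' ^ (treeDepth ξ - treeDepth ξ')
          ≤ u (treeDepth ξ) ^ (-p) * (s' * (1 - s')⁻¹) := by
      intro ξ hξ
      rw [← Finset.mul_sum]
      exact mul_le_mul_of_nonneg_left (hchain ξ hξ) (Real.rpow_pos_of_pos (hu _) _).le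
    calc K * ∑ ξ ∈ M, ∑ ξ' ∈ (P \ M).filter (fun ξ' => ξ' < ξ),
          u (treeDepth ξ) ^ (-p) * s' ^ (treeDepth ξ - treeDepth ξ')
        ≤ K * ∑ ξ ∈ M, u (treeDepth ξ) ^ (-p) * (s' * (1 - s')⁻¹) :=
          mul_le_mul_of_nonneg_left (Finset.sum_le_sum h2) hKnn
      _ = K * (s' * (1 - s')⁻¹) * (∑ ξ ∈ M, u (treeDepth ξ) ^ (-p)) := by
          rw [← Finset.sum_mul]; ring
  have hkey : ∑ ξ' ∈ P, (u (treeDepth ξ') * Nf ξ') ^ q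
      ≤ 2 * ∑ ξ ∈ M, u (treeDepth ξ) ^ (-p) := by
    rw [← Finset.sum_sdiff hMP]
    have e1 : ∑ ξ' ∈ M, (u (treeDepth ξ') * Nf ξ') ^ q = ∑ ξ ∈ M, u (treeDepth ξ) ^ (-p) :=
      Finset.sum_congr rfl hUN_q_diag
    have hTnn : (0:ℝ) ≤ ∑ ξ ∈ M, u (treeDepth ξ) ^ (-p) :=
      Finset.sum_nonneg fun x _ => (Real.rpow_pos_of_pos (hu _) _).le
    have hKT : K * (s' * (1 - s')⁻¹) * (∑ ξ ∈ M, u (treeDepth ξ) ^ (-p))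
        ≤ ∑ ξ ∈ M, u (treeDepth ξ) ^ (-p) := by
      have := mul_le_mul_of_nonneg_right hKbound hTnn
      linarith
    linarith [e1, hoff]
  -- conclusion
  set T : ℝ := ∑ ξ ∈ M, u (treeDepth ξ) ^ (-p) with hT_def
  have hMne : M.Nonempty := by
    obtain ⟨m, hm⟩ := Finset.exists_maximal (s := D) ⟨ξs, hD.1⟩
    exact ⟨m, Finset.mem_filter.2 ⟨hm.1, fun ζ hζ hlt => hlt.not_ge (hm.2 hζ hlt.le)⟩⟩
  have hTpos : 0 < T := by
    rw [hT_def]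
    exact Finset.sum_pos (fun ξ _ => Real.rpow_pos_of_pos (hu _) _) hMne
  set bset : Set ℝ := {b : ℝ | ∃ f : V → ℝ,
    (∀ ξ ∈ D, (∀ ζ ∈ D, ¬ ξ < ζ) →
      ∑ ξ' ∈ Finset.univ.filter (fun ξ' : V => ξs ≤ ξ' ∧ ξ' ≤ ξ),
        f ξ' * u (treeDepth ξ') = 1) ∧
    b = (∑ ξ : V, |f ξ| ^ p) ^ (1 / p)} with hbset_def
  have hbeta : betaD p (fun ξ : V => u (treeDepth ξ)) ξs D = sInf bset := rfl
  -- the easy witness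
  set f₀ : V → ℝ := fun ξ => if ξ ∈ M then (u (treeDepth ξ))⁻¹ else 0 with hf₀_def
  have hf₀c : ∀ ξ ∈ D, (∀ ζ ∈ D, ¬ ξ < ζ) →
      ∑ ξ' ∈ Finset.univ.filter (fun ξ' : V => ξs ≤ ξ' ∧ ξ' ≤ ξ),
        f₀ ξ' * u (treeDepth ξ') = 1 := by
    intro ξ hξD hmax
    have hξM : ξ ∈ M := Finset.mem_filter.2 ⟨hξD, hmax⟩
    have e : ∀ ξ' ∈ Finset.univ.filter (fun ξ' : V => ξs ≤ ξ' ∧ ξ' ≤ ξ),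
        f₀ ξ' * u (treeDepth ξ') = if ξ' = ξ then 1 else 0 := by
      intro ξ' hξ'
      obtain ⟨-, -, hle⟩ := Finset.mem_filter.1 hξ'
      by_cases hmem : ξ' ∈ M
      · have heq : ξ' = ξ := by
          by_contra hne
          exact (hMmax hmem) ξ hξD (lt_of_le_of_ne hle hne)
        rw [hf₀_def]
        simp only [if_pos hmem, if_pos heq]
        exact inv_mul_cancel₀ (hu _).ne'
      · have hne : ξ' ≠ ξ := fun h => hmem (h ▸ hξM)
        rw [hf₀_def]
        simp only [if_neg hmem, if_neg hne, zero_mul]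
    rw [Finset.sum_congr rfl e, Finset.sum_ite_eq' _ ξ (fun _ => (1:ℝ))]
    rw [if_pos (Finset.mem_filter.2 ⟨Finset.mem_univ _, hD.2.1 ξ hξD, le_refl ξ⟩)]
  have hsum₀ : ∑ ξ : V, |f₀ ξ| ^ p = T := by
    have e : ∀ ξ : V, |f₀ ξ| ^ p = if ξ ∈ M then u (treeDepth ξ) ^ (-p) else 0 := by
      intro ξ
      by_cases hξ : ξ ∈ M
      · rw [hf₀_def]
        simp only [if_pos hξ]
        rw [abs_of_nonneg (inv_nonneg.2 (hu _).le), Real.inv_rpow (hu _).le,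
          ← Real.rpow_neg (hu _).le]
      · rw [hf₀_def]
        simp only [if_neg hξ, abs_zero]
        exact Real.zero_rpow hp0.ne'
    rw [hT_def]
    rw [Finset.sum_congr rfl (fun ξ _ => e ξ), Finset.sum_ite_mem, Finset.univ_inter]
  have hb₀mem : T ^ (1/p) ∈ bset := ⟨f₀, hf₀c, by rw [hsum₀]⟩
  -- the lower bound for all members
  have hlow : ∀ b ∈ bset, 2⁻¹ * T ^ (1/p) ≤ b := by
    rintro b ⟨f, hf, rfl⟩
    have hTid : T = ∑ ξ' ∈ P, f ξ' * u (treeDepth ξ') * Nf ξ' := by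
      rw [hT_def]
      calc ∑ ξ ∈ M, u (treeDepth ξ) ^ (-p)
          = ∑ ξ ∈ M, ∑ ξ' ∈ P.filter (fun ξ' => ξ' ≤ ξ),
              u (treeDepth ξ) ^ (-p) * (f ξ' * u (treeDepth ξ')) := by
            refine Finset.sum_congr rfl fun ξ hξ => ?_
            have hc := hf ξ (hMsub hξ) (hMmax hξ)
            have hPf : P.filter (fun ξ' => ξ' ≤ ξ)
                = Finset.univ.filter (fun ξ' : V => ξs ≤ ξ' ∧ ξ' ≤ ξ) := by
              rw [hP_def, Finset.filter_filter]
            rw [hPf, ← Finset.mul_sum, hc, mul_one]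
        _ = ∑ ξ' ∈ P, ∑ ξ ∈ M.filter (fun ξ => ξ' ≤ ξ),
              u (treeDepth ξ) ^ (-p) * (f ξ' * u (treeDepth ξ')) :=
            sum_filter_swap M P (fun ξ ξ' => ξ' ≤ ξ)
              (fun ξ ξ' => u (treeDepth ξ) ^ (-p) * (f ξ' * u (treeDepth ξ')))
        _ = ∑ ξ' ∈ P, f ξ' * u (treeDepth ξ') * Nf ξ' := by
            refine Finset.sum_congr rfl fun ξ' _ => ?_
            rw [hNf_def]
            simp only
            rw [← Finset.sum_mul]
            ring
    have habs : T ≤ ∑ ξ' ∈ P, |f ξ'| * (u (treeDepth ξ') * Nf ξ') := by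
      rw [hTid]
      refine Finset.sum_le_sum fun ξ' _ => ?_
      have hnn : 0 ≤ u (treeDepth ξ') * Nf ξ' := mul_nonneg (hu _).le (hNf_nonneg ξ')
      calc f ξ' * u (treeDepth ξ') * Nf ξ' = f ξ' * (u (treeDepth ξ') * Nf ξ') := by ring
      _ ≤ |f ξ'| * (u (treeDepth ξ') * Nf ξ') := mul_le_mul_of_nonneg_right (le_abs_self _) hnn
    have hhold := Real.inner_le_Lp_mul_Lq P (fun ξ => |f ξ|) (fun ξ => u (treeDepth ξ) * Nf ξ) hpq
    simp only [abs_abs] at hhold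
    have e2 : ∀ ξ' ∈ P, |u (treeDepth ξ') * Nf ξ'| ^ q = (u (treeDepth ξ') * Nf ξ') ^ q :=
      fun ξ' _ => by rw [abs_of_nonneg (mul_nonneg (hu _).le (hNf_nonneg ξ'))]
    rw [Finset.sum_congr rfl e2] at hhold
    have hfp_nn : (0:ℝ) ≤ ∑ ξ' ∈ P, |f ξ'| ^ p :=
      Finset.sum_nonneg fun _ _ => Real.rpow_nonneg (abs_nonneg _) _
    have h3 : (∑ ξ' ∈ P, |f ξ'| ^ p) ^ (1/p) ≤ (∑ ξ : V, |f ξ| ^ p) ^ (1/p) := by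
      apply Real.rpow_le_rpow hfp_nn ?_ (by positivity)
      apply Finset.sum_le_sum_of_subset_of_nonneg (Finset.subset_univ P)
      exact fun _ _ _ => Real.rpow_nonneg (abs_nonneg _) _
    have hqsum_nn : (0:ℝ) ≤ ∑ ξ' ∈ P, (u (treeDepth ξ') * Nf ξ') ^ q :=
      Finset.sum_nonneg fun ξ' _ =>
        Real.rpow_nonneg (mul_nonneg (hu _).le (hNf_nonneg _)) _
    have h4 : (∑ ξ' ∈ P, (u (treeDepth ξ') * Nf ξ') ^ q) ^ (1/q) ≤ (2 * T) ^ (1/q) :=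
      Real.rpow_le_rpow hqsum_nn hkey (by positivity)
    have hb_nn : (0:ℝ) ≤ (∑ ξ : V, |f ξ| ^ p) ^ (1/p) :=
      Real.rpow_nonneg (Finset.sum_nonneg fun _ _ => Real.rpow_nonneg (abs_nonneg _) _) _
    have hchain2 : T ≤ (∑ ξ : V, |f ξ| ^ p) ^ (1/p) * (2*T) ^ (1/q) := by
      refine le_trans habs (le_trans hhold ?_)
      exact mul_le_mul h3 h4 (Real.rpow_nonneg hqsum_nn _) hb_nn
    have h2T : (0:ℝ) < 2 * T := by linarith
    have h2Tq : (0:ℝ) < (2*T) ^ ((1:ℝ)/q) := Real.rpow_pos_of_pos h2T _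
    have hb_ge : T / (2*T) ^ ((1:ℝ)/q) ≤ (∑ ξ : V, |f ξ| ^ p) ^ (1/p) := by
      rw [div_le_iff₀ h2Tq]; exact hchain2
    refine le_trans ?_ hb_ge
    have e5 : (2*T) ^ ((1:ℝ)/q) ≤ 2 * T ^ ((1:ℝ)/q) := by
      rw [Real.mul_rpow two_pos.le hTpos.le]
      apply mul_le_mul_of_nonneg_right ?_ (Real.rpow_nonneg hTpos.le _)
      calc (2:ℝ) ^ ((1:ℝ)/q) ≤ 2 ^ (1:ℝ) :=
        Real.rpow_le_rpow_of_exponent_le one_le_two ((div_le_one hq0).2 hq1.le)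
      _ = 2 := Real.rpow_one 2
    have h2Tq' : (0:ℝ) < 2 * T ^ ((1:ℝ)/q) := by
      have := Real.rpow_pos_of_pos hTpos ((1:ℝ)/q)
      linarith
    have e6 : T / (2 * T ^ ((1:ℝ)/q)) ≤ T / (2*T) ^ ((1:ℝ)/q) :=
      div_le_div_of_nonneg_left hTpos.le h2Tq e5
    refine le_trans (le_of_eq ?_) e6
    rw [eq_div_iff h2Tq'.ne']
    rw [show (2:ℝ)⁻¹ * T^((1:ℝ)/p) * (2 * T^((1:ℝ)/q)) = T^((1:ℝ)/p) * T^((1:ℝ)/q) from by ring,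
      ← Real.rpow_add hTpos, show (1:ℝ)/p + 1/q = 1 from by linarith [hpq_sum], Real.rpow_one]
  have hBdd : BddBelow bset := by
    refine ⟨0, fun b hb => ?_⟩
    obtain ⟨f, -, rfl⟩ := hb
    exact Real.rpow_nonneg (Finset.sum_nonneg fun _ _ => Real.rpow_nonneg (abs_nonneg _) _) _
  have hβle : betaD p (fun ξ : V => u (treeDepth ξ)) ξs D ≤ T ^ (1/p) := by
    rw [hbeta]; exact csInf_le hBdd hb₀mem
  have hβge : 2⁻¹ * T ^ (1/p) ≤ betaD p (fun ξ : V => u (treeDepth ξ)) ξs D := by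
    rw [hbeta]; exact le_csInf ⟨_, hb₀mem⟩ hlow
  have hTp_pos : (0:ℝ) < T ^ ((1:ℝ)/p) := Real.rpow_pos_of_pos hTpos _
  have hβpos : 0 < betaD p (fun ξ : V => u (treeDepth ξ)) ξs D :=
    lt_of_lt_of_le (by linarith) hβge
  constructor
  · rw [Real.rpow_neg hTpos.le]
    exact inv_anti₀ hβpos hβle
  · rw [Real.rpow_neg hTpos.le]
    have h := inv_anti₀ (by linarith : (0:ℝ) < 2⁻¹ * T ^ (1/p)) hβge
    refine le_trans h (le_of_eq ?_)
    rw [mul_inv, inv_inv]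
end
end
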